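/- arXiv:2004.14778 — 7 statements merged into one kernel-verified Lean document; each statement's English description precedes it below -/
import Mathlib

section
/- Let X be an m×m complex Hermitian positive definite matrix and n ≥ 1 an integer. The function f_{X,n}(Y) := trace((X·Y^{−1})^n), which is real-valued on Hermitian positive definite matrices Y, is strictly convex on the set of m×m Hermitian positive definite matrices: for any Hermitian positive definite Y₁ ≠ Y₂ and any t ∈ (0,1), trace((X·(tY₁+(1−t)Y₂)^{−1})^n) < t·trace((X·Y₁^{−1})^n) + (1−t)·trace((X·Y₂^{−1})^n). -/
open Matrix ComplexOrder

private lemma tangent_aux (k : ℕ) {a b : ℝ} (ha : 0 ≤ a) (hb : 0 ≤ b) :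
    ((k : ℝ) + 1) * (a ^ k * b) ≤ b ^ (k + 1) + (k : ℝ) * a ^ (k + 1) := by
  induction k with
  | zero => simp
  | succ k ih =>
    have hp : (0:ℝ) ≤ (b ^ (k+1) - a ^ (k+1)) * (b - a) := by
      rcases le_total a b with h | h
      · exact mul_nonneg (sub_nonneg.2 (pow_le_pow_left₀ ha h (k+1))) (sub_nonneg.2 h)
      · have h1 : b ^ (k+1) - a ^ (k+1) ≤ 0 := sub_nonpos.2 (pow_le_pow_left₀ hb h (k+1))
        have := mul_nonneg (neg_nonneg.2 h1) (neg_nonneg.2 (sub_nonpos.2 h))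
        nlinarith [this]
    have h2 : a * (((k:ℝ) + 1) * (a ^ k * b)) ≤ a * (b ^ (k+1) + (k:ℝ) * a ^ (k+1)) :=
      mul_le_mul_of_nonneg_left ih ha
    have hp' : a ^ (k+1) * b ≤ b ^ (k+2) + a ^ (k+2) - a * b ^ (k+1) := by
      have e : (b ^ (k+1) - a ^ (k+1)) * (b - a)
          = b ^ (k+2) + a ^ (k+2) - a * b ^ (k+1) - a ^ (k+1) * b := by ring
      rw [e] at hp; linarith
    push_cast
    calc ((k:ℝ) + 1 + 1) * (a ^ (k+1) * b)
        = a * (((k:ℝ) + 1) * (a ^ k * b)) + a ^ (k+1) * b := by ring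
      _ ≤ a * (b ^ (k+1) + (k:ℝ) * a ^ (k+1)) + (b ^ (k+2) + a ^ (k+2) - a * b ^ (k+1)) :=
          add_le_add h2 hp'
      _ = b ^ (k+1+1) + ((k:ℝ) + 1) * a ^ (k+1+1) := by ring

section MatrixAux

variable {m : ℕ}

private lemma herm_dot {W : Matrix (Fin m) (Fin m) ℂ} (hW : W.IsHermitian)
    (x v : Fin m → ℂ) : star x ⬝ᵥ W *ᵥ v = star (W *ᵥ x) ⬝ᵥ v := by
  rw [star_mulVec, hW.eq, dotProduct_mulVec]

private lemma mulVec_ne_zero {W : Matrix (Fin m) (Fin m) ℂ} (hdet : IsUnit W.det)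
    {x : Fin m → ℂ} (hx : x ≠ 0) : W *ᵥ x ≠ 0 := by
  intro h
  apply hx
  have := congrArg (fun v => W⁻¹ *ᵥ v) h
  simpa [mulVec_mulVec, nonsing_inv_mul _ hdet] using this

private lemma posdef_conj {W C : Matrix (Fin m) (Fin m) ℂ} (hC : C.PosDef)
    (hW : W.IsHermitian) (hdet : IsUnit W.det) : (W * C * W).PosDef := by
  refine Matrix.PosDef.of_dotProduct_mulVec_pos ?_ ?_
  · have : (W * C * W)ᴴ = Wᴴ * (Cᴴ * Wᴴ) := by
      rw [conjTranspose_mul, conjTranspose_mul]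
    rw [Matrix.IsHermitian, this, hW.eq, hC.1.eq, mul_assoc]
  · intro x hx
    have h1 : (W * C * W) *ᵥ x = W *ᵥ (C *ᵥ (W *ᵥ x)) := by
      rw [mulVec_mulVec, mulVec_mulVec]
    rw [h1, herm_dot hW]
    exact hC.dotProduct_mulVec_pos (mulVec_ne_zero hdet hx)

private lemma psd_conj {W D : Matrix (Fin m) (Fin m) ℂ} (hD : D.PosSemidef)
    (hW : W.IsHermitian) : (W * D * W).PosSemidef := by
  have := hD.mul_mul_conjTranspose_same W
  rwa [hW.eq] at this

private lemma posdef_smul {Y : Matrix (Fin m) (Fin m) ℂ} (hY : Y.PosDef) {c : ℝ}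
    (hc : 0 < c) : ((c : ℂ) • Y).PosDef := by
  refine Matrix.PosDef.of_dotProduct_mulVec_pos ?_ ?_
  · rw [Matrix.IsHermitian, conjTranspose_smul, hY.1.eq]
    congr 1
    simp [Complex.conj_ofReal]
  · intro x hx
    rw [smul_mulVec, dotProduct_smul, smul_eq_mul]
    exact mul_pos (by exact_mod_cast hc) (hY.dotProduct_mulVec_pos hx)

private lemma quad_identity {C : Matrix (Fin m) (Fin m) ℂ} (hC : C.PosDef)
    (x y : Fin m → ℂ) :
    star x ⬝ᵥ C⁻¹ *ᵥ x - (star y ⬝ᵥ x + star x ⬝ᵥ y - star y ⬝ᵥ C *ᵥ y)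
      = star (y - C⁻¹ *ᵥ x) ⬝ᵥ C *ᵥ (y - C⁻¹ *ᵥ x) := by
  have hdet : IsUnit C.det := hC.isUnit.map detMonoidHom
  have hinv : C⁻¹.IsHermitian := hC.1.inv
  set z := C⁻¹ *ᵥ x with hz
  have hz1 : C *ᵥ z = x := by
    rw [hz, mulVec_mulVec, mul_nonsing_inv _ hdet, one_mulVec]
  have hz2 : star z ⬝ᵥ C *ᵥ y = star x ⬝ᵥ y := by
    rw [hz, ← herm_dot hinv, mulVec_mulVec, nonsing_inv_mul _ hdet, one_mulVec]
  have hz3 : star z ⬝ᵥ x = star x ⬝ᵥ z := by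
    rw [hz, ← herm_dot hinv]
  rw [mulVec_sub, star_sub, sub_dotProduct, dotProduct_sub, dotProduct_sub,
    hz1, hz2, hz3]
  ring

open scoped MatrixOrder in
private lemma psd_eq_ct_mul {E : Matrix (Fin m) (Fin m) ℂ} (hE : E.PosSemidef) :
    ∃ B : Matrix (Fin m) (Fin m) ℂ, E = Bᴴ * B := by
  obtain ⟨B, hB⟩ := CStarAlgebra.nonneg_iff_eq_star_mul_self.mp hE.nonneg
  exact ⟨B, hB⟩

open scoped MatrixOrder in
private lemma psd_sqrt_exists {A : Matrix (Fin m) (Fin m) ℂ} (hA : A.PosSemidef) :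
    ∃ W : Matrix (Fin m) (Fin m) ℂ, W.IsHermitian ∧ W * W = A :=
  ⟨CFC.sqrt A, (CFC.sqrt_nonneg A).posSemidef.1, CFC.sqrt_mul_sqrt_self A hA.nonneg⟩

private lemma trace_psd_pos {E : Matrix (Fin m) (Fin m) ℂ} (hE : E.PosSemidef)
    {w : Fin m → ℂ} (hw : 0 < star w ⬝ᵥ E *ᵥ w) : 0 < E.trace := by
  obtain ⟨B, rfl⟩ := psd_eq_ct_mul hE
  have htr : (Bᴴ * B).trace = ((∑ j, ∑ i, Complex.normSq (B i j) : ℝ) : ℂ) := by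
    rw [Matrix.trace]
    push_cast
    refine Finset.sum_congr rfl fun j _ => ?_
    rw [Matrix.diag_apply, Matrix.mul_apply]
    refine Finset.sum_congr rfl fun i _ => ?_
    rw [Matrix.conjTranspose_apply, Complex.star_def, Complex.normSq_eq_conj_mul_self]
  rw [htr]
  rw [Complex.zero_lt_real]
  rcases (Finset.sum_nonneg fun j _ => Finset.sum_nonneg fun i _ =>
    Complex.normSq_nonneg (B i j)).lt_or_eq with h | h
  · exact h
  · exfalso
    have hB : B = 0 := by
      ext i j
      have h1 := (Finset.sum_eq_zero_iff_of_nonneg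
        (fun j _ => Finset.sum_nonneg fun i _ => Complex.normSq_nonneg (B i j))).mp h.symm
      have h2 := (Finset.sum_eq_zero_iff_of_nonneg
        (fun i _ => Complex.normSq_nonneg (B i j))).mp (h1 j (Finset.mem_univ j)) i
        (Finset.mem_univ i)
      simpa using Complex.normSq_eq_zero.mp h2
    rw [hB] at hw
    simp at hw

private lemma stepA {Y₁ Y₂ : Matrix (Fin m) (Fin m) ℂ} (hY₁ : Y₁.PosDef) (hY₂ : Y₂.PosDef)
    (hne : Y₁ ≠ Y₂) {t : ℝ} (ht0 : 0 < t) (ht1 : t < 1) :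
    ∃ Δ : Matrix (Fin m) (Fin m) ℂ, Δ.PosSemidef ∧ (∃ x, 0 < star x ⬝ᵥ Δ *ᵥ x) ∧
      (t:ℂ) • Y₁⁻¹ + ((1 - t : ℝ):ℂ) • Y₂⁻¹ = ((t:ℂ) • Y₁ + ((1 - t : ℝ):ℂ) • Y₂)⁻¹ + Δ := by
  have ht1' : (0:ℝ) < 1 - t := by linarith
  set C : Matrix (Fin m) (Fin m) ℂ := (t:ℂ) • Y₁ + ((1 - t : ℝ):ℂ) • Y₂ with hCdef
  have hC : C.PosDef := (posdef_smul hY₁ ht0).add (posdef_smul hY₂ ht1')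
  set Δ : Matrix (Fin m) (Fin m) ℂ := (t:ℂ) • Y₁⁻¹ + ((1 - t : ℝ):ℂ) • Y₂⁻¹ - C⁻¹ with hΔdef
  have hts : (t:ℂ) + ((1 - t : ℝ):ℂ) = 1 := by push_cast; ring
  have key : ∀ x : Fin m → ℂ,
      star x ⬝ᵥ Δ *ᵥ x
        = (t:ℂ) * (star (C⁻¹ *ᵥ x - Y₁⁻¹ *ᵥ x) ⬝ᵥ Y₁ *ᵥ (C⁻¹ *ᵥ x - Y₁⁻¹ *ᵥ x))
          + ((1 - t : ℝ):ℂ) * (star (C⁻¹ *ᵥ x - Y₂⁻¹ *ᵥ x) ⬝ᵥ Y₂ *ᵥ (C⁻¹ *ᵥ x - Y₂⁻¹ *ᵥ x)) := by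
    intro x
    set z := C⁻¹ *ᵥ x with hz
    have q1 := quad_identity hY₁ x z
    have q2 := quad_identity hY₂ x z
    have qC := quad_identity hC x z
    rw [← hz, sub_self] at qC
    simp only [Matrix.mulVec_zero, dotProduct_zero] at qC
    have hCz : star z ⬝ᵥ C *ᵥ z
        = (t:ℂ) * (star z ⬝ᵥ Y₁ *ᵥ z) + ((1 - t : ℝ):ℂ) * (star z ⬝ᵥ Y₂ *ᵥ z) := by
      rw [hCdef]
      simp [add_mulVec, smul_mulVec, dotProduct_add, dotProduct_smul, smul_eq_mul]
    have hΔx : star x ⬝ᵥ Δ *ᵥ x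
        = (t:ℂ) * (star x ⬝ᵥ Y₁⁻¹ *ᵥ x) + ((1 - t : ℝ):ℂ) * (star x ⬝ᵥ Y₂⁻¹ *ᵥ x)
          - star x ⬝ᵥ C⁻¹ *ᵥ x := by
      rw [hΔdef]
      simp [sub_mulVec, add_mulVec, smul_mulVec, dotProduct_sub, dotProduct_add,
        dotProduct_smul, smul_eq_mul]
    linear_combination hΔx + (t:ℂ) * q1 + ((1 - t : ℝ):ℂ) * q2
      + (star z ⬝ᵥ x + star x ⬝ᵥ z) * hts - qC + hCz
  refine ⟨Δ, Matrix.PosSemidef.of_dotProduct_mulVec_nonneg ?_ ?_, ?_, by rw [hΔdef]; abel⟩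
  · rw [hΔdef, Matrix.IsHermitian, conjTranspose_sub, conjTranspose_add,
      conjTranspose_smul, conjTranspose_smul, hY₁.1.inv.eq, hY₂.1.inv.eq, hC.1.inv.eq]
    congr 2 <;> simp [Complex.conj_ofReal]
  · intro x
    rw [key x]
    exact add_nonneg
      (mul_nonneg (by positivity) (hY₁.posSemidef.dotProduct_mulVec_nonneg _))
      (mul_nonneg (by positivity) (hY₂.posSemidef.dotProduct_mulVec_nonneg _))
  · by_contra hcon
    push_neg at hcon
    apply hne
    have hall : ∀ x : Fin m → ℂ, Y₁⁻¹ *ᵥ x = Y₂⁻¹ *ᵥ x := by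
      intro x
      have h0 : star x ⬝ᵥ Δ *ᵥ x = 0 := by
        by_contra hne0
        refine hcon x (lt_of_le_of_ne ?_ (Ne.symm hne0))
        rw [key x]
        exact add_nonneg
          (mul_nonneg (by positivity) (hY₁.posSemidef.dotProduct_mulVec_nonneg _))
          (mul_nonneg (by positivity) (hY₂.posSemidef.dotProduct_mulVec_nonneg _))
      rw [key x] at h0
      have hg1 : (0:ℂ) ≤ (t:ℂ) * (star (C⁻¹ *ᵥ x - Y₁⁻¹ *ᵥ x) ⬝ᵥ Y₁ *ᵥ (C⁻¹ *ᵥ x - Y₁⁻¹ *ᵥ x)) :=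
        mul_nonneg (by positivity) (hY₁.posSemidef.dotProduct_mulVec_nonneg _)
      have hg2 : (0:ℂ) ≤ ((1 - t : ℝ):ℂ) * (star (C⁻¹ *ᵥ x - Y₂⁻¹ *ᵥ x) ⬝ᵥ Y₂ *ᵥ (C⁻¹ *ᵥ x - Y₂⁻¹ *ᵥ x)) :=
        mul_nonneg (by positivity) (hY₂.posSemidef.dotProduct_mulVec_nonneg _)
      have hz1 : (t:ℂ) * (star (C⁻¹ *ᵥ x - Y₁⁻¹ *ᵥ x) ⬝ᵥ Y₁ *ᵥ (C⁻¹ *ᵥ x - Y₁⁻¹ *ᵥ x)) = 0 := by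
        refine le_antisymm ?_ hg1
        calc (t:ℂ) * _ ≤ (t:ℂ) * _ + ((1 - t : ℝ):ℂ) * _ := le_add_of_nonneg_right hg2
          _ = 0 := h0
      have hz2 : ((1 - t : ℝ):ℂ) * (star (C⁻¹ *ᵥ x - Y₂⁻¹ *ᵥ x) ⬝ᵥ Y₂ *ᵥ (C⁻¹ *ᵥ x - Y₂⁻¹ *ᵥ x)) = 0 := by
        refine le_antisymm ?_ hg2
        calc ((1 - t : ℝ):ℂ) * _ ≤ (t:ℂ) * _ + ((1 - t : ℝ):ℂ) * _ := le_add_of_nonneg_left hg1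
          _ = 0 := h0
      have hw1 : C⁻¹ *ᵥ x - Y₁⁻¹ *ᵥ x = 0 := by
        by_contra hw
        have hf1 : star (C⁻¹ *ᵥ x - Y₁⁻¹ *ᵥ x) ⬝ᵥ Y₁ *ᵥ (C⁻¹ *ᵥ x - Y₁⁻¹ *ᵥ x) = 0 := by
          rcases mul_eq_zero.mp hz1 with h | h
          · exact absurd h (by exact_mod_cast ht0.ne')
          · exact h
        exact (hY₁.dotProduct_mulVec_pos hw).ne' hf1
      have hw2 : C⁻¹ *ᵥ x - Y₂⁻¹ *ᵥ x = 0 := by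
        by_contra hw
        have hf2 : star (C⁻¹ *ᵥ x - Y₂⁻¹ *ᵥ x) ⬝ᵥ Y₂ *ᵥ (C⁻¹ *ᵥ x - Y₂⁻¹ *ᵥ x) = 0 := by
          rcases mul_eq_zero.mp hz2 with h | h
          · exact absurd h (by exact_mod_cast (by linarith : (1 - t : ℝ) ≠ 0))
          · exact h
        exact (hY₂.dotProduct_mulVec_pos hw).ne' hf2
      rw [← sub_eq_zero]
      rw [sub_eq_zero] at hw1 hw2
      rw [← hw1, ← hw2, sub_self]
    have hinv : Y₁⁻¹ = Y₂⁻¹ := by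
      ext i j
      have h := congrFun (hall (Pi.single j 1)) i
      simpa [mulVec_single] using h
    have hd1 : IsUnit Y₁.det := hY₁.isUnit.map detMonoidHom
    have hd2 : IsUnit Y₂.det := hY₂.isUnit.map detMonoidHom
    rw [← nonsing_inv_nonsing_inv Y₁ hd1, hinv, nonsing_inv_nonsing_inv Y₂ hd2]

private lemma pow_spectral {P : Matrix (Fin m) (Fin m) ℂ} (hP : P.IsHermitian) (a : ℕ) :
    P ^ a = (hP.eigenvectorUnitary : Matrix (Fin m) (Fin m) ℂ)
      * diagonal (fun i => ((hP.eigenvalues i : ℝ) : ℂ) ^ a)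
      * (star hP.eigenvectorUnitary : Matrix (Fin m) (Fin m) ℂ) := by
  set U : Matrix (Fin m) (Fin m) ℂ := (hP.eigenvectorUnitary : Matrix (Fin m) (Fin m) ℂ) with hUdef
  have hUU : U * star U = 1 := mem_unitaryGroup_iff.mp hP.eigenvectorUnitary.2
  have hUU' : star U * U = 1 := mem_unitaryGroup_iff'.mp hP.eigenvectorUnitary.2
  induction a with
  | zero =>
    simp only [pow_zero]
    have h1 : (diagonal (fun _ : Fin m => (1 : ℂ))) = (1 : Matrix (Fin m) (Fin m) ℂ) := by
      rw [← Matrix.diagonal_one]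
    rw [h1, mul_one, hUU]
  | succ a ih =>
    have hspec : P = U * diagonal (fun i => ((hP.eigenvalues i : ℝ) : ℂ)) * star U := by
      have := hP.spectral_theorem
      rw [Unitary.conjStarAlgAut_apply] at this
      exact this
    have h1 : P ^ (a+1)
        = U * diagonal (fun i => ((hP.eigenvalues i : ℝ) : ℂ) ^ a) * star U *
          (U * diagonal (fun i => ((hP.eigenvalues i : ℝ) : ℂ)) * star U) := by
      rw [pow_succ]
      exact congrArg₂ (· * ·) ih hspec
    rw [h1]
    rw [show U * diagonal (fun i => ((hP.eigenvalues i : ℝ) : ℂ) ^ a) * star U *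
          (U * diagonal (fun i => ((hP.eigenvalues i : ℝ) : ℂ)) * star U)
        = U * diagonal (fun i => ((hP.eigenvalues i : ℝ) : ℂ) ^ a) * (star U * U) *
          diagonal (fun i => ((hP.eigenvalues i : ℝ) : ℂ)) * star U by
      simp only [mul_assoc]]
    rw [hUU', mul_one, mul_assoc _ _ (diagonal _), diagonal_mul_diagonal]
    simp [pow_succ]

private lemma exists_weights {P Q : Matrix (Fin m) (Fin m) ℂ}
    (hP : P.IsHermitian) (hQ : Q.IsHermitian) :
    ∃ T : Fin m → Fin m → ℝ, (∀ i j, 0 ≤ T i j) ∧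
      ∀ a b : ℕ, (P ^ a * Q ^ b).trace =
        ((∑ i, ∑ j, T i j * (hP.eigenvalues i ^ a * hQ.eigenvalues j ^ b) : ℝ) : ℂ) := by
  set U : Matrix (Fin m) (Fin m) ℂ := (hP.eigenvectorUnitary : Matrix (Fin m) (Fin m) ℂ) with hUdef
  set V : Matrix (Fin m) (Fin m) ℂ := (hQ.eigenvectorUnitary : Matrix (Fin m) (Fin m) ℂ) with hVdef
  set S : Matrix (Fin m) (Fin m) ℂ := star U * V with hSdef
  refine ⟨fun i j => Complex.normSq (S i j), fun i j => Complex.normSq_nonneg _, fun a b => ?_⟩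
  have hVU : star V * U = star S := by
    rw [hSdef, StarMul.star_mul, star_star]
  rw [pow_spectral hP a, pow_spectral hQ b]
  rw [show U * diagonal (fun i => ((hP.eigenvalues i : ℝ) : ℂ) ^ a) * star U *
        (V * diagonal (fun j => ((hQ.eigenvalues j : ℝ) : ℂ) ^ b) * star V)
      = U * (diagonal (fun i => ((hP.eigenvalues i : ℝ) : ℂ) ^ a) * (star U * V) *
        diagonal (fun j => ((hQ.eigenvalues j : ℝ) : ℂ) ^ b)) * star V by
    simp only [mul_assoc]]
  rw [trace_mul_cycle, ← hSdef, ← mul_assoc, hVU]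
  rw [Matrix.trace]
  push_cast
  rw [Finset.sum_comm]
  refine Finset.sum_congr rfl fun i _ => ?_
  rw [Matrix.diag_apply, Matrix.mul_diagonal, Matrix.mul_apply, Finset.sum_mul]
  refine Finset.sum_congr rfl fun x _ => ?_
  rw [Matrix.star_apply, Matrix.diagonal_mul, Complex.star_def,
    show (starRingEnd ℂ) (S x i) * (((hP.eigenvalues x : ℝ) : ℂ) ^ a * S x i)
        * ((hQ.eigenvalues i : ℝ) : ℂ) ^ b
      = ((starRingEnd ℂ) (S x i) * S x i)
        * (((hP.eigenvalues x : ℝ) : ℂ) ^ a * ((hQ.eigenvalues i : ℝ) : ℂ) ^ b) from by ring,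
    ← Complex.normSq_eq_conj_mul_self]

private lemma klein {n : ℕ} (hn : 1 ≤ n) {P Q : Matrix (Fin m) (Fin m) ℂ}
    (hP : P.PosDef) (hQ : Q.PosDef) :
    (n : ℂ) * (P ^ (n - 1) * Q).trace ≤ (Q ^ n).trace + ((n : ℂ) - 1) * (P ^ n).trace := by
  obtain ⟨T, hT, htr⟩ := exists_weights hP.1 hQ.1
  have h1 := htr (n - 1) 1
  have h2 := htr 0 n
  have h3 := htr n 0
  simp only [pow_one, pow_zero, one_mul, mul_one] at h1 h2 h3
  rw [h1, h2, h3]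
  have hcast : ((n : ℂ)) = ((n : ℝ) : ℂ) := by push_cast; ring
  rw [hcast, ← Complex.ofReal_one, ← Complex.ofReal_sub, ← Complex.ofReal_mul,
    ← Complex.ofReal_mul, ← Complex.ofReal_add, Complex.real_le_real]
  rw [Finset.mul_sum, Finset.mul_sum, ← Finset.sum_add_distrib]
  refine Finset.sum_le_sum fun i _ => ?_
  rw [Finset.mul_sum, Finset.mul_sum, ← Finset.sum_add_distrib]
  refine Finset.sum_le_sum fun j _ => ?_
  have ha := (hP.eigenvalues_pos i).le
  have hb := (hQ.eigenvalues_pos j).le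
  have key := tangent_aux (n - 1) ha hb
  rw [Nat.sub_add_cancel hn] at key
  have hcast2 : ((n - 1 : ℕ) : ℝ) = (n : ℝ) - 1 := by
    rw [Nat.cast_sub hn]; simp
  rw [hcast2] at key
  have := mul_le_mul_of_nonneg_left key (hT i j)
  nlinarith [this]

end MatrixAux

/-- **Strict convexity of `Y ↦ trace((X Y⁻¹)ⁿ)`** on Hermitian positive definite matrices.
For a fixed Hermitian positive definite `X` and an integer `n ≥ 1`, and for any two distinct
Hermitian positive definite matrices `Y₁ ≠ Y₂` and `t ∈ (0,1)`, one has
`trace((X (tY₁+(1−t)Y₂)⁻¹)ⁿ) < t·trace((X Y₁⁻¹)ⁿ) + (1−t)·trace((X Y₂⁻¹)ⁿ)`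
(an inequality of real numbers, expressed in the complex order). -/
theorem strictConvex_trace_pow_inv
    {m : ℕ} (X : Matrix (Fin m) (Fin m) ℂ) (hX : X.PosDef)
    (n : ℕ) (hn : 1 ≤ n)
    (Y₁ Y₂ : Matrix (Fin m) (Fin m) ℂ) (hY₁ : Y₁.PosDef) (hY₂ : Y₂.PosDef)
    (hne : Y₁ ≠ Y₂) (t : ℝ) (ht : t ∈ Set.Ioo (0 : ℝ) 1) :
    Matrix.trace ((X * ((t : ℂ) • Y₁ + ((1 - t : ℝ) : ℂ) • Y₂)⁻¹) ^ n)
      < (t : ℂ) * Matrix.trace ((X * Y₁⁻¹) ^ n)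
        + ((1 - t : ℝ) : ℂ) * Matrix.trace ((X * Y₂⁻¹) ^ n) := by
  obtain ⟨ht0, ht1⟩ := ht
  have ht1' : (0:ℝ) < 1 - t := by linarith
  set C : Matrix (Fin m) (Fin m) ℂ := (t:ℂ) • Y₁ + ((1 - t : ℝ):ℂ) • Y₂ with hCdef
  have hC : C.PosDef := (posdef_smul hY₁ ht0).add (posdef_smul hY₂ ht1')
  -- square root of X
  obtain ⟨W, hWh, hWW⟩ := psd_sqrt_exists hX.posSemidef
  have hdetX : IsUnit X.det := hX.isUnit.map detMonoidHom
  have hdetW : IsUnit W.det := by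
    have h : W.det * W.det = X.det := by rw [← det_mul, hWW]
    exact isUnit_of_mul_isUnit_left (h ▸ hdetX)
  -- conjugation-invariance of the traces
  have conj_pow : ∀ (M : Matrix (Fin m) (Fin m) ℂ) (k : ℕ),
      (W * M * W⁻¹) ^ k = W * M ^ k * W⁻¹ := by
    intro M k
    induction k with
    | zero => rw [pow_zero, pow_zero, mul_one, mul_nonsing_inv _ hdetW]
    | succ k ih =>
      rw [pow_succ, ih, pow_succ]
      rw [show W * M ^ k * W⁻¹ * (W * M * W⁻¹) = W * M ^ k * (W⁻¹ * W) * M * W⁻¹ by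
        simp only [mul_assoc]]
      rw [nonsing_inv_mul _ hdetW, mul_one]
      simp only [mul_assoc]
  have key_tr : ∀ M : Matrix (Fin m) (Fin m) ℂ,
      ((X * M) ^ n).trace = ((W * M * W) ^ n).trace := by
    intro M
    have hXM : X * M = W * (W * M * W) * W⁻¹ := by
      rw [← hWW]
      rw [show W * (W * M * W) * W⁻¹ = W * W * M * (W * W⁻¹) by simp only [mul_assoc]]
      rw [mul_nonsing_inv _ hdetW, mul_one]
    rw [hXM, conj_pow, trace_mul_cycle, nonsing_inv_mul _ hdetW, one_mul]
  rw [key_tr C⁻¹, key_tr Y₁⁻¹, key_tr Y₂⁻¹]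
  set P : Matrix (Fin m) (Fin m) ℂ := W * C⁻¹ * W with hPdef
  set P₁ : Matrix (Fin m) (Fin m) ℂ := W * Y₁⁻¹ * W with hP₁def
  set P₂ : Matrix (Fin m) (Fin m) ℂ := W * Y₂⁻¹ * W with hP₂def
  have hP : P.PosDef := posdef_conj hC.inv hWh hdetW
  have hP₁ : P₁.PosDef := posdef_conj hY₁.inv hWh hdetW
  have hP₂ : P₂.PosDef := posdef_conj hY₂.inv hWh hdetW
  obtain ⟨Δ, hΔpsd, ⟨x₀, hx₀⟩, hEq⟩ := stepA hY₁ hY₂ hne ht0 ht1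
  set Q : Matrix (Fin m) (Fin m) ℂ := (t:ℂ) • P₁ + ((1 - t : ℝ):ℂ) • P₂ with hQdef
  have hQ : Q.PosDef := (posdef_smul hP₁ ht0).add (posdef_smul hP₂ ht1')
  set Δ' : Matrix (Fin m) (Fin m) ℂ := W * Δ * W with hΔ'def
  have hQP : Q = P + Δ' := by
    have h1 : Q = W * ((t:ℂ) • Y₁⁻¹ + ((1 - t : ℝ):ℂ) • Y₂⁻¹) * W := by
      rw [hQdef, hP₁def, hP₂def]
      simp only [Matrix.mul_add, Matrix.add_mul, mul_smul_comm, smul_mul_assoc]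
    rw [h1, hEq, hPdef, hΔ'def]
    simp only [Matrix.mul_add, Matrix.add_mul]
    rfl
  have hΔ'psd : Δ'.PosSemidef := psd_conj hΔpsd hWh
  -- positivity witness for Δ'
  have hΔ'w : ∃ w, 0 < star w ⬝ᵥ Δ' *ᵥ w := by
    refine ⟨W⁻¹ *ᵥ x₀, ?_⟩
    have hWw : W *ᵥ (W⁻¹ *ᵥ x₀) = x₀ := by
      rw [mulVec_mulVec, mul_nonsing_inv _ hdetW, one_mulVec]
    have e : star (W⁻¹ *ᵥ x₀) ⬝ᵥ Δ' *ᵥ (W⁻¹ *ᵥ x₀) = star x₀ ⬝ᵥ Δ *ᵥ x₀ := by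
      rw [hΔ'def, show (W * Δ * W) *ᵥ (W⁻¹ *ᵥ x₀) = W *ᵥ (Δ *ᵥ (W *ᵥ (W⁻¹ *ᵥ x₀))) by
        simp only [← mulVec_mulVec], herm_dot hWh, hWw]
    rw [e]; exact hx₀
  -- strict positivity of trace (P^(n-1) * Δ')
  have hpowpsd : (P ^ (n-1)).PosSemidef := hP.posSemidef.pow (n-1)
  have htrpos : 0 < (P ^ (n-1) * Δ').trace := by
    obtain ⟨w₀, hw₀⟩ := hΔ'w
    obtain ⟨R, hRh, hRR⟩ := psd_sqrt_exists hpowpsd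
    have hdetR : IsUnit R.det := by
      have h : R.det * R.det = (P ^ (n-1)).det := by rw [← det_mul, hRR]
      have h2 : IsUnit (P ^ (n-1)).det :=
        (isUnit_iff_isUnit_det _).mp (hP.isUnit.pow (n-1))
      exact isUnit_of_mul_isUnit_left (h ▸ h2)
    have hcyc : (P ^ (n-1) * Δ').trace = (R * Δ' * R).trace := by
      rw [← hRR]
      exact (trace_mul_cycle R Δ' R).symm
    rw [hcyc]
    have hEpsd : (R * Δ' * R).PosSemidef := psd_conj hΔ'psd hRh
    refine trace_psd_pos hEpsd (w := R⁻¹ *ᵥ w₀) ?_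
    have hRw : R *ᵥ (R⁻¹ *ᵥ w₀) = w₀ := by
      rw [mulVec_mulVec, mul_nonsing_inv _ hdetR, one_mulVec]
    have e : star (R⁻¹ *ᵥ w₀) ⬝ᵥ (R * Δ' * R) *ᵥ (R⁻¹ *ᵥ w₀) = star w₀ ⬝ᵥ Δ' *ᵥ w₀ := by
      rw [show (R * Δ' * R) *ᵥ (R⁻¹ *ᵥ w₀) = R *ᵥ (Δ' *ᵥ (R *ᵥ (R⁻¹ *ᵥ w₀))) by
        simp only [← mulVec_mulVec], herm_dot hRh, hRw]
    rw [e]; exact hw₀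
  -- Step B : trace(Pⁿ) < trace(Qⁿ)
  have hnpos : (0:ℂ) < (n:ℂ) := by positivity
  have hQsplit : (P ^ (n-1) * Q).trace = (P ^ n).trace + (P ^ (n-1) * Δ').trace := by
    rw [hQP, Matrix.mul_add, trace_add, ← pow_succ, Nat.sub_add_cancel hn]
  have hab : (P ^ n).trace < (Q ^ n).trace := by
    have h4 : (n:ℂ) * (P ^ n).trace < (n:ℂ) * (P ^ (n-1) * Q).trace := by
      rw [hQsplit]
      exact mul_lt_mul_of_pos_left (lt_add_of_pos_right _ htrpos) hnpos
    have h6 : (n:ℂ) * (P ^ n).trace < (Q ^ n).trace + ((n:ℂ) - 1) * (P ^ n).trace :=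
      lt_of_lt_of_le h4 (klein hn hP hQ)
    have h7 : (P ^ n).trace + ((n:ℂ) - 1) * (P ^ n).trace
        < (Q ^ n).trace + ((n:ℂ) - 1) * (P ^ n).trace := by
      calc (P ^ n).trace + ((n:ℂ) - 1) * (P ^ n).trace = (n:ℂ) * (P ^ n).trace := by ring
        _ < _ := h6
    exact lt_of_add_lt_add_right h7
  -- Step C : trace(Qⁿ) ≤ t trace(P₁ⁿ) + (1-t) trace(P₂ⁿ)
  have hts : (t:ℂ) + ((1 - t : ℝ):ℂ) = 1 := by push_cast; ring
  have hbc : (Q ^ n).trace ≤ (t:ℂ) * (P₁ ^ n).trace + ((1 - t : ℝ):ℂ) * (P₂ ^ n).trace := by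
    have hsplit : (Q ^ n).trace
        = (t:ℂ) * (Q ^ (n-1) * P₁).trace + ((1 - t : ℝ):ℂ) * (Q ^ (n-1) * P₂).trace := by
      have e1 : Q ^ n = Q ^ (n-1) * Q := by rw [← pow_succ, Nat.sub_add_cancel hn]
      rw [e1]
      nth_rewrite 1 [hQdef]
      rw [Matrix.mul_add, mul_smul_comm, mul_smul_comm, trace_add, trace_smul, trace_smul]
      simp only [smul_eq_mul]
      rfl
    have hc1 := mul_le_mul_of_nonneg_left (klein hn hQ hP₁) (le_of_lt (by positivity : (0:ℂ) < (t:ℂ)))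
    have hc2 := mul_le_mul_of_nonneg_left (klein hn hQ hP₂)
      (le_of_lt (by positivity : (0:ℂ) < ((1 - t : ℝ):ℂ)))
    have h8 : (n:ℂ) * (Q ^ n).trace
        ≤ (t:ℂ) * ((P₁ ^ n).trace + ((n:ℂ) - 1) * (Q ^ n).trace)
          + ((1 - t : ℝ):ℂ) * ((P₂ ^ n).trace + ((n:ℂ) - 1) * (Q ^ n).trace) := by
      calc (n:ℂ) * (Q ^ n).trace
          = (t:ℂ) * ((n:ℂ) * (Q ^ (n-1) * P₁).trace)
            + ((1 - t : ℝ):ℂ) * ((n:ℂ) * (Q ^ (n-1) * P₂).trace) := by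
            rw [hsplit]; ring
        _ ≤ _ := add_le_add hc1 hc2
    have h9 : (t:ℂ) * ((P₁ ^ n).trace + ((n:ℂ) - 1) * (Q ^ n).trace)
          + ((1 - t : ℝ):ℂ) * ((P₂ ^ n).trace + ((n:ℂ) - 1) * (Q ^ n).trace)
        = ((t:ℂ) * (P₁ ^ n).trace + ((1 - t : ℝ):ℂ) * (P₂ ^ n).trace)
          + ((n:ℂ) - 1) * (Q ^ n).trace := by
      linear_combination (((n:ℂ) - 1) * (Q ^ n).trace) * hts
    rw [h9] at h8
    have h10 : (Q ^ n).trace + ((n:ℂ) - 1) * (Q ^ n).trace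
        ≤ ((t:ℂ) * (P₁ ^ n).trace + ((1 - t : ℝ):ℂ) * (P₂ ^ n).trace)
          + ((n:ℂ) - 1) * (Q ^ n).trace := by
      calc (Q ^ n).trace + ((n:ℂ) - 1) * (Q ^ n).trace = (n:ℂ) * (Q ^ n).trace := by ring
        _ ≤ _ := h8
    exact le_of_add_le_add_right h10
  exact lt_of_lt_of_le hab hbc
end

section
/- Let p : ℝⁿ → ℝ be the evaluation of a real polynomial in n variables, let θ₀ ∈ ℝⁿ and ε > 0 be such that p(θ₀) = 0 and p(θ) ≥ 0 for all θ in the ball B_ε(θ₀), and let m be a positive integer with m ≥ n/2. Then ∫_{B_ε(θ₀)} p(θ)^{−m} dθ = +∞, where the integral is the Lebesgue integral of the nonnegative extended-real-valued function θ ↦ p(θ)^{−m} (with the convention 0^{−m} = +∞). -/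
open MeasureTheory Metric Set
open scoped ENNReal NNReal

private lemma quad_bound {E : Type*} [NormedAddCommGroup E] [NormedSpace ℝ E]
    (f : E → ℝ) (hf : ContDiff ℝ 2 f) (θ₀ : E) (ε : ℝ) (hε : 0 < ε)
    (h0 : f θ₀ = 0) (hpos : ∀ θ ∈ ball θ₀ ε, 0 ≤ f θ) :
    ∃ C > (0:ℝ), ∃ r > (0:ℝ), r ≤ ε ∧ ∀ θ ∈ ball θ₀ r, f θ ≤ C * ‖θ - θ₀‖ ^ 2 := by
  have hmin : IsLocalMin f θ₀ := by
    filter_upwards [ball_mem_nhds θ₀ hε] with θ hθ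
    rw [h0]; exact hpos θ hθ
  have hd0 : fderiv ℝ f θ₀ = 0 := hmin.fderiv_eq_zero
  have hd1 : ContDiff ℝ 1 (fderiv ℝ f) := hf.fderiv_right (by norm_num)
  obtain ⟨K, t, ht, hK⟩ := hd1.contDiffAt.exists_lipschitzOnWith
  obtain ⟨r, hr0, hrt⟩ := Metric.nhds_basis_closedBall.mem_iff.1
    (Filter.inter_mem ht (Metric.ball_mem_nhds θ₀ hε))
  refine ⟨K + 1, by positivity, min r ε, by positivity, min_le_right _ _, ?_⟩
  intro θ hθ
  have hθr : θ ∈ closedBall θ₀ r :=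
    closedBall_subset_closedBall (min_le_left r ε) (ball_subset_closedBall hθ)
  have hsub : closedBall θ₀ ‖θ - θ₀‖ ⊆ closedBall θ₀ r := by
    apply closedBall_subset_closedBall
    simpa [dist_eq_norm] using hθr
  have hθ₀mem : θ₀ ∈ closedBall θ₀ ‖θ - θ₀‖ := mem_closedBall_self (norm_nonneg _)
  have hθmem : θ ∈ closedBall θ₀ ‖θ - θ₀‖ := by simp [mem_closedBall, dist_eq_norm]
  have bound : ∀ ξ ∈ closedBall θ₀ ‖θ - θ₀‖, ‖fderiv ℝ f ξ‖ ≤ (K:ℝ) * ‖θ - θ₀‖ := by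
    intro ξ hξ
    have hξt : ξ ∈ t := (hrt (hsub hξ)).1
    have hθ₀t : θ₀ ∈ t := (hrt (mem_closedBall_self hr0.le)).1
    have hlip := hK.dist_le_mul ξ hξt θ₀ hθ₀t
    rw [hd0, dist_zero_right] at hlip
    calc ‖fderiv ℝ f ξ‖ ≤ (K:ℝ) * dist ξ θ₀ := hlip
    _ ≤ (K:ℝ) * ‖θ - θ₀‖ := by
        have := mem_closedBall.1 hξ
        gcongr
  have diff : ∀ ξ ∈ closedBall θ₀ ‖θ - θ₀‖, DifferentiableAt ℝ f ξ :=
    fun ξ _ => (hf.differentiable (by norm_num)).differentiableAt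
  have hmv := (convex_closedBall θ₀ ‖θ - θ₀‖).norm_image_sub_le_of_norm_fderiv_le
    diff bound hθ₀mem hθmem
  rw [h0, sub_zero] at hmv
  calc f θ ≤ ‖f θ‖ := le_abs_self _
  _ ≤ (K:ℝ) * ‖θ - θ₀‖ * ‖θ - θ₀‖ := hmv
  _ ≤ ((K:ℝ) + 1) * ‖θ - θ₀‖ ^ 2 := by nlinarith [norm_nonneg (θ - θ₀), sq_nonneg ‖θ - θ₀‖]

private lemma eval_contDiff {n : ℕ} (p : MvPolynomial (Fin n) ℝ) :
    ContDiff ℝ 2 (fun θ : EuclideanSpace ℝ (Fin n) => MvPolynomial.eval (fun i => θ i) p) := by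
  have key : ∀ g : Fin n → ℝ, MvPolynomial.aeval g p = MvPolynomial.eval g p := by
    intro g; rw [MvPolynomial.aeval_def, Algebra.algebraMap_self]; rfl
  have h : ∀ x : EuclideanSpace ℝ (Fin n), AnalyticAt ℝ
      (fun θ : EuclideanSpace ℝ (Fin n) => MvPolynomial.eval (fun i => θ i) p) x := by
    intro x
    have := AnalyticAt.aeval_mvPolynomial (𝕜 := ℝ) (B := ℝ)
      (f := fun (θ : EuclideanSpace ℝ (Fin n)) (i : Fin n) => θ i) (z := x)
      (fun i => ((EuclideanSpace.proj i : EuclideanSpace ℝ (Fin n) →L[ℝ] ℝ)).analyticAt x) p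
    simpa only [key] using this
  exact contDiff_iff_contDiffAt.2 fun x => (h x).contDiffAt

private lemma zpow_neg_nat' (M : ℕ) (hM : 1 ≤ M) (x : ℝ≥0∞) : x ^ (-(M:ℤ)) = (x ^ M)⁻¹ := by
  obtain ⟨m, rfl⟩ : ∃ m, M = m + 1 := ⟨M - 1, by omega⟩
  rw [show (-((m+1:ℕ):ℤ)) = Int.negSucc m by rw [Int.negSucc_eq]; push_cast; ring, zpow_negSucc]

private lemma real_ineq' {C r s : ℝ} {n M : ℕ} (hC : 0 < C) (hr : 0 < r) (hs : 0 < s)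
    (hsr : s ≤ r) (hnM : n ≤ 2*M) :
    ((C*r^2)^M)⁻¹ * (r^n * (1 - (1/2:ℝ)^n)) ≤ ((C*s^2)^M)⁻¹ * (s^n * (1 - (1/2:ℝ)^n)) := by
  have h0 : (0:ℝ) ≤ 1 - (1/2:ℝ)^n := by
    have : (1/2:ℝ)^n ≤ 1 := pow_le_one₀ (by norm_num) (by norm_num)
    linarith
  have key : r^n * s^(2*M) ≤ s^n * r^(2*M) := by
    calc r^n * s^(2*M) = (r^n * s^n) * s^(2*M-n) := by rw [mul_assoc, ← pow_add]; congr 2; omega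
    _ ≤ (r^n * s^n) * r^(2*M-n) := by gcongr
    _ = s^n * r^(2*M) := by rw [mul_comm (r^n) (s^n), mul_assoc, ← pow_add]; congr 2; omega
  have hd1 : (0:ℝ) < (C*r^2)^M := by positivity
  have hd2 : (0:ℝ) < (C*s^2)^M := by positivity
  rw [inv_mul_eq_div, inv_mul_eq_div, div_le_div_iff₀ hd1 hd2]
  have e1 : (C*r^2)^M = C^M * r^(2*M) := by rw [mul_pow, ← pow_mul]
  have e2 : (C*s^2)^M = C^M * s^(2*M) := by rw [mul_pow, ← pow_mul]
  rw [e1, e2]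
  have hCM : (0:ℝ) ≤ C^M := by positivity
  nlinarith [mul_le_mul_of_nonneg_left key (mul_nonneg h0 hCM)]

private lemma diverge_aux {n : ℕ} (hn : 1 ≤ n) (θ₀ : EuclideanSpace ℝ (Fin n)) {C r : ℝ}
    (hC : 0 < C) (hr : 0 < r) {M : ℕ} (hM : 1 ≤ M) (hnM : n ≤ 2*M) :
    ∫⁻ θ in ball θ₀ r, (ENNReal.ofReal (C * ‖θ - θ₀‖^2)) ^ (-(M:ℤ)) ∂volume = ⊤ := by
  haveI : Nontrivial (EuclideanSpace ℝ (Fin n)) := by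
    refine nontrivial_of_ne (EuclideanSpace.single ⟨0, hn⟩ (1:ℝ)) 0 ?_
    intro h; have := congrArg (fun x => x ⟨0, hn⟩) h; simp [EuclideanSpace.single_apply] at this
  set g : EuclideanSpace ℝ (Fin n) → ℝ≥0∞ :=
    fun θ => (ENNReal.ofReal (C * ‖θ - θ₀‖^2)) ^ (-(M:ℤ)) with hg
  set v := volume (ball (0:EuclideanSpace ℝ (Fin n)) 1) with hv
  have hvpos : 0 < v := measure_ball_pos _ _ one_pos
  have hvfin : v < ⊤ := measure_ball_lt_top
  have hball : ∀ s : ℝ, 0 < s →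
      volume (ball θ₀ s) = ENNReal.ofReal (s^n) * v := by
    intro s hs
    rw [Measure.addHaar_ball volume θ₀ hs.le, finrank_euclideanSpace_fin]
  set S : ℕ → Set (EuclideanSpace ℝ (Fin n)) :=
    fun k => ball θ₀ (r/2^k) \ ball θ₀ (r/2^k/2) with hS
  have hrk : ∀ k : ℕ, (0:ℝ) < r/2^k := fun k => by positivity
  have hrk_le : ∀ k : ℕ, r/2^k ≤ r := fun k =>
    div_le_self hr.le (one_le_pow₀ (by norm_num))
  have hmeas : ∀ k, MeasurableSet (S k) := fun k => measurableSet_ball.diff measurableSet_ball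
  have hd : ∀ k j, k < j → Disjoint (S k) (S j) := by
    intro k j h
    rw [Set.disjoint_left]
    intro x hxk hxj
    refine hxk.2 (ball_subset_ball ?_ hxj.1)
    rw [div_div, ← pow_succ]
    exact div_le_div_of_nonneg_left hr.le (by positivity)
      (pow_le_pow_right₀ (by norm_num) (by omega))
  have hdisj : Pairwise (Function.onFun Disjoint S) := by
    intro k j hkj
    rcases hkj.lt_or_gt with h | h
    · exact hd k j h
    · exact (hd j k h).symm
  have hsub : (⋃ k, S k) ⊆ ball θ₀ r := by
    rintro x ⟨s, ⟨k, rfl⟩, hk⟩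
    exact ball_subset_ball (hrk_le k) hk.1
  have hSmeas : ∀ k, volume (S k) = ENNReal.ofReal ((r/2^k)^n - (r/2^k/2)^n) * v := by
    intro k
    rw [hS]
    simp only
    rw [measure_diff (ball_subset_ball (half_le_self (hrk k).le))
        measurableSet_ball.nullMeasurableSet measure_ball_lt_top.ne,
      hball _ (hrk k), hball _ (by positivity),
      ← ENNReal.sub_mul (fun _ _ => hvfin.ne), ← ENNReal.ofReal_sub _ (by positivity)]
  set c0 : ℝ := ((C*r^2)^M)⁻¹ * (r^n * (1 - (1/2:ℝ)^n)) with hc0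
  have hhalf : (1/2:ℝ)^n < 1 := pow_lt_one₀ (by norm_num) (by norm_num) (by omega)
  have hc0pos : 0 < c0 := by
    have h1 : (0:ℝ) < 1 - (1/2:ℝ)^n := by linarith
    positivity
  have hterm : ∀ k, ENNReal.ofReal c0 * v ≤ ∫⁻ θ in S k, g θ ∂volume := by
    intro k
    set s := r/2^k with hs_def
    have hs : 0 < s := hrk k
    have hpt : ∀ θ ∈ S k, ENNReal.ofReal ((C*s^2)^M)⁻¹ ≤ g θ := by
      intro θ hθ
      rw [hg]
      simp only
      rw [zpow_neg_nat' M hM]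
      have hnorm : ‖θ - θ₀‖ < s := by
        have := hθ.1; rwa [mem_ball, dist_eq_norm] at this
      have hle : ENNReal.ofReal (C * ‖θ-θ₀‖^2) ≤ ENNReal.ofReal (C * s^2) := by
        apply ENNReal.ofReal_le_ofReal
        exact mul_le_mul_of_nonneg_left
          (pow_le_pow_left₀ (norm_nonneg _) hnorm.le 2) hC.le
      calc ENNReal.ofReal ((C*s^2)^M)⁻¹ = (ENNReal.ofReal ((C*s^2)^M))⁻¹ :=
            ENNReal.ofReal_inv_of_pos (by positivity)
      _ = ((ENNReal.ofReal (C*s^2))^M)⁻¹ := by rw [ENNReal.ofReal_pow (by positivity)]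
      _ ≤ ((ENNReal.ofReal (C*‖θ-θ₀‖^2))^M)⁻¹ :=
            ENNReal.inv_le_inv.2 (pow_le_pow_left₀ zero_le hle M)
    have hc0le : c0 ≤ ((C*s^2)^M)⁻¹ * (s^n - (s/2)^n) := by
      have e : s^n - (s/2)^n = s^n * (1 - (1/2:ℝ)^n) := by
        rw [show (s/2) = s * (1/2) by ring, mul_pow]; ring
      rw [e, hc0]
      exact real_ineq' hC hr hs (hrk_le k) hnM
    calc ENNReal.ofReal c0 * v
        ≤ ENNReal.ofReal (((C*s^2)^M)⁻¹ * (s^n - (s/2)^n)) * v :=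
          mul_le_mul_left (ENNReal.ofReal_le_ofReal hc0le) v
    _ = ENNReal.ofReal ((C*s^2)^M)⁻¹ * volume (S k) := by
          rw [hSmeas k, ENNReal.ofReal_mul (by positivity), mul_assoc]
    _ = ∫⁻ _ in S k, ENNReal.ofReal ((C*s^2)^M)⁻¹ ∂volume := (setLIntegral_const _ _).symm
    _ ≤ ∫⁻ θ in S k, g θ ∂volume := setLIntegral_mono' (hmeas k) hpt
  have htop : (⊤:ℝ≥0∞) ≤ ∫⁻ θ in ball θ₀ r, g θ ∂volume := by
    calc (⊤:ℝ≥0∞) = ∑' _ : ℕ, ENNReal.ofReal c0 * v :=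
          (ENNReal.tsum_const_eq_top_of_ne_zero
            (mul_ne_zero (by simp [ENNReal.ofReal_eq_zero]; linarith) hvpos.ne')).symm
    _ ≤ ∑' k : ℕ, ∫⁻ θ in S k, g θ ∂volume := ENNReal.tsum_le_tsum hterm
    _ = ∫⁻ θ in ⋃ k, S k, g θ ∂volume := (lintegral_iUnion hmeas hdisj g).symm
    _ ≤ ∫⁻ θ in ball θ₀ r, g θ ∂volume := lintegral_mono_set hsub
  exact top_le_iff.1 htop

/-- **Divergence of the integral of a negative power of a nonnegative polynomial at a zero.**
If the evaluation of a real polynomial `p` in `n` variables vanishes at `θ₀`, is nonnegative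
on the Euclidean ball `B_ε(θ₀)`, and `M ≥ n/2` is a positive integer, then
`∫_{B_ε(θ₀)} p(θ)^{-M} dθ = ∞` (Lebesgue integral of the nonnegative extended-real
function, with the convention `0^{-M} = ∞`). -/
theorem lintegral_pow_neg_of_polynomial_zero_eq_top
    {n : ℕ} (hn : 1 ≤ n) (p : MvPolynomial (Fin n) ℝ)
    (θ₀ : EuclideanSpace ℝ (Fin n)) (ε : ℝ) (hε : 0 < ε)
    (h0 : MvPolynomial.eval (fun i => θ₀ i) p = 0)
    (hnonneg : ∀ θ ∈ Metric.ball θ₀ ε, 0 ≤ MvPolynomial.eval (fun i => θ i) p)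
    (M : ℕ) (hM : 1 ≤ M) (hMn : (n : ℝ) / 2 ≤ (M : ℝ)) :
    ∫⁻ θ in Metric.ball θ₀ ε,
        (ENNReal.ofReal (MvPolynomial.eval (fun i => θ i) p)) ^ (-(M : ℤ)) ∂volume
      = ⊤ := by
  have hnM : n ≤ 2 * M := by
    rw [div_le_iff₀ (by norm_num)] at hMn
    have : (n:ℝ) ≤ ((2*M : ℕ) : ℝ) := by push_cast; linarith
    exact_mod_cast this
  obtain ⟨C, hC, r, hr, hrε, hbound⟩ :=
    quad_bound (fun θ : EuclideanSpace ℝ (Fin n) => MvPolynomial.eval (fun i => θ i) p)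
      (eval_contDiff p) θ₀ ε hε h0 hnonneg
  refine top_le_iff.1 ?_
  calc (⊤:ℝ≥0∞)
      = ∫⁻ θ in ball θ₀ r, (ENNReal.ofReal (C * ‖θ - θ₀‖^2)) ^ (-(M:ℤ)) ∂volume :=
        (diverge_aux hn θ₀ hC hr hM hnM).symm
  _ ≤ ∫⁻ θ in ball θ₀ r,
        (ENNReal.ofReal (MvPolynomial.eval (fun i => θ i) p)) ^ (-(M:ℤ)) ∂volume := by
      refine setLIntegral_mono' measurableSet_ball ?_
      intro θ hθ
      rw [zpow_neg_nat' M hM, zpow_neg_nat' M hM]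
      exact ENNReal.inv_le_inv.2 (pow_le_pow_left₀ zero_le
        (ENNReal.ofReal_le_ofReal (hbound θ hθ)) M)
  _ ≤ _ := lintegral_mono_set (ball_subset_ball hrε)
end

section
/- Let ν ≥ 2 be an integer and A a nonsingular m×m complex matrix, and write A^{−*} := (A^*)^{−1}. The function f_A(B) := trace((A^{−1} B A^{−*})^{1−1/ν}), where the power of the Hermitian positive semidefinite matrix A^{−1}BA^{−*} is taken via the continuous functional calculus (i.e. by applying t ↦ t^{1−1/ν} to its eigenvalues), is real-valued and concave on the set of m×m Hermitian positive semidefinite matrices B, and strictly concave on the set of Hermitian positive definite matrices B. -/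
open Matrix ComplexOrder

/-- Real power of a matrix via the continuous functional calculus: for a Hermitian
positive semidefinite `S = UΛU*`, `matRPow S c = U Λ^c U*` (junk value otherwise). -/
noncomputable def matRPow {m : ℕ} (S : Matrix (Fin m) (Fin m) ℂ) (c : ℝ) :
    Matrix (Fin m) (Fin m) ℂ :=
  cfc (fun t : ℝ => t ^ c) S

open Finset
set_option linter.unusedSectionVars false
set_option maxHeartbeats 1000000

section Aux

variable {n : Type*} [Fintype n] [DecidableEq n]

lemma psd_smul_real {t : ℝ} (ht : 0 ≤ t) {X : Matrix n n ℂ} (hX : X.PosSemidef) :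
    ((t : ℂ) • X).PosSemidef := by
  refine Matrix.posSemidef_iff_dotProduct_mulVec.mpr ⟨?_, ?_⟩
  · unfold Matrix.IsHermitian
    rw [conjTranspose_smul, hX.1.eq]
    congr 1
    simp [Complex.ext_iff]
  · intro x
    rw [Matrix.smul_mulVec, dotProduct_smul, smul_eq_mul]
    exact mul_nonneg (by exact_mod_cast ht) (hX.dotProduct_mulVec_nonneg x)

lemma psd_diag_re_nonneg {M : Matrix n n ℂ} (hM : M.PosSemidef) (i : n) : 0 ≤ (M i i).re := by
  have h := hM.dotProduct_mulVec_nonneg (Pi.single i 1)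
  have h2 : dotProduct (star (Pi.single i 1)) (M *ᵥ Pi.single i 1) = M i i := by
    simp [dotProduct, mulVec, Pi.single_apply, star, Complex.ext_iff,
      Finset.sum_ite_eq, apply_ite]
  rw [h2] at h
  exact (Complex.le_def.mp h).1

lemma herm_diag_im {M : Matrix n n ℂ} (hM : M.IsHermitian) (i : n) : (M i i).im = 0 := by
  have := congrFun (congrFun hM.eq i) i
  rw [Matrix.conjTranspose_apply] at this
  have h2 := congrArg Complex.im this
  simp at h2
  linarith

lemma unit_col_sum {W : Matrix n n ℂ} (hW : W ∈ Matrix.unitaryGroup n ℂ) (i : n) :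
    ∑ j, Complex.normSq (W j i) = 1 := by
  have h1 : star W * W = 1 := Matrix.UnitaryGroup.star_mul_self ⟨W, hW⟩
  have h := congrFun (congrFun h1 i) i
  rw [Matrix.mul_apply] at h
  simp only [Matrix.star_apply, Matrix.one_apply_eq] at h
  have : ((∑ j, Complex.normSq (W j i) : ℝ) : ℂ) = 1 := by
    rw [Complex.ofReal_sum]
    rw [← h]
    exact Finset.sum_congr rfl fun j _ => Complex.normSq_eq_conj_mul_self
  exact_mod_cast this

lemma unit_row_sum {W : Matrix n n ℂ} (hW : W ∈ Matrix.unitaryGroup n ℂ) (j : n) :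
    ∑ i, Complex.normSq (W j i) = 1 := by
  have h1 : W * star W = 1 := Matrix.mem_unitaryGroup_iff.mp hW
  have h := congrFun (congrFun h1 j) j
  rw [Matrix.mul_apply] at h
  simp only [Matrix.star_apply, Matrix.one_apply_eq] at h
  have : ((∑ i, Complex.normSq (W j i) : ℝ) : ℂ) = 1 := by
    rw [Complex.ofReal_sum]
    rw [← h]
    exact Finset.sum_congr rfl fun i _ => by rw [Complex.normSq_eq_conj_mul_self]; exact mul_comm _ _
  exact_mod_cast this

lemma conj_repr {X : Matrix n n ℂ} (hX : X.IsHermitian) (V : Matrix n n ℂ) :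
    star V * X * V =
      star (star (hX.eigenvectorUnitary : Matrix n n ℂ) * V) *
        Matrix.diagonal (RCLike.ofReal ∘ hX.eigenvalues) *
        (star (hX.eigenvectorUnitary : Matrix n n ℂ) * V) := by
  conv_lhs => rw [hX.spectral_theorem, Unitary.conjStarAlgAut_apply]
  rw [Matrix.star_mul, star_star]
  simp only [Matrix.mul_assoc]

lemma entry_repr {X : Matrix n n ℂ} (hX : X.IsHermitian) (V : Matrix n n ℂ) (i : n) :
    (star V * X * V) i i =
      ((∑ j, Complex.normSq ((star (hX.eigenvectorUnitary : Matrix n n ℂ) * V) j i)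
          * hX.eigenvalues j : ℝ) : ℂ) := by
  set W := star (hX.eigenvectorUnitary : Matrix n n ℂ) * V with hWdef
  rw [conj_repr hX V, Matrix.mul_assoc, Matrix.mul_apply, Complex.ofReal_sum]
  refine Finset.sum_congr rfl fun j _ => ?_
  rw [Matrix.star_apply, Matrix.diagonal_mul]
  push_cast
  rw [Complex.normSq_eq_conj_mul_self]
  simp only [Function.comp_apply, Complex.star_def]
  ring_nf
  rw [hWdef]; exact congrArg (· * _) (mul_comm _ _)

lemma peierls_le {f : ℝ → ℝ} (hf : ConcaveOn ℝ (Set.Ici 0) f)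
    {X : Matrix n n ℂ} (hX : X.PosSemidef) {V : Matrix n n ℂ}
    (hV : V ∈ Matrix.unitaryGroup n ℂ) :
    ∑ j, f (hX.1.eigenvalues j) ≤ ∑ i, f (((star V * X * V) i i).re) := by
  set U : Matrix n n ℂ := (hX.1.eigenvectorUnitary : Matrix n n ℂ) with hU
  set W : Matrix n n ℂ := star U * V with hWdef
  have hWu : W ∈ Matrix.unitaryGroup n ℂ := mul_mem (Unitary.star_mem (hX.1.eigenvectorUnitary).2) hV
  set μ := hX.1.eigenvalues with hμ
  have hre : ∀ i, ((star V * X * V) i i).re = ∑ j, Complex.normSq (W j i) * μ j := by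
    intro i; rw [entry_repr hX.1 V i, Complex.ofReal_re]
  have jensen : ∀ i, ∑ j, Complex.normSq (W j i) * f (μ j)
      ≤ f (((star V * X * V) i i).re) := by
    intro i
    rw [hre i]
    have := hf.le_map_sum (t := Finset.univ) (w := fun j => Complex.normSq (W j i)) (p := μ)
      (fun j _ => Complex.normSq_nonneg _) (unit_col_sum hWu i)
      (fun j _ => hX.eigenvalues_nonneg j)
    simpa [smul_eq_mul] using this
  calc ∑ j, f (μ j) = ∑ j, (∑ i, Complex.normSq (W j i)) * f (μ j) := by
        refine Finset.sum_congr rfl fun j _ => ?_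
        rw [unit_row_sum hWu j, one_mul]
    _ = ∑ i, ∑ j, Complex.normSq (W j i) * f (μ j) := by
        simp_rw [Finset.sum_mul]; rw [Finset.sum_comm]
    _ ≤ ∑ i, f (((star V * X * V) i i).re) := Finset.sum_le_sum fun i _ => jensen i

lemma peierls_eq {f : ℝ → ℝ} (hf : StrictConcaveOn ℝ (Set.Ici 0) f)
    {X : Matrix n n ℂ} (hX : X.PosSemidef) {V : Matrix n n ℂ}
    (hV : V ∈ Matrix.unitaryGroup n ℂ)
    (heq : ∑ i, f (((star V * X * V) i i).re) = ∑ j, f (hX.1.eigenvalues j)) :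
    star V * X * V = Matrix.diagonal (fun i => ((((star V * X * V) i i).re : ℝ) : ℂ)) := by
  classical
  set U : Matrix n n ℂ := (hX.1.eigenvectorUnitary : Matrix n n ℂ) with hU
  set W : Matrix n n ℂ := star U * V with hWdef
  have hWu : W ∈ Matrix.unitaryGroup n ℂ := mul_mem (Unitary.star_mem (hX.1.eigenvectorUnitary).2) hV
  set μ := hX.1.eigenvalues with hμ
  set a : n → ℝ := fun i => ((star V * X * V) i i).re with ha
  set w : n → n → ℝ := fun i j => Complex.normSq (W j i) with hw
  have hre : ∀ i, a i = ∑ j, w i j * μ j := by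
    intro i
    show ((star V * X * V) i i).re = _
    rw [entry_repr hX.1 V i, Complex.ofReal_re]
  have jensen : ∀ i, ∑ j, w i j * f (μ j) ≤ f (a i) := by
    intro i
    rw [hre i]
    have := hf.concaveOn.le_map_sum (t := Finset.univ) (w := w i) (p := μ)
      (fun j _ => Complex.normSq_nonneg _) (unit_col_sum hWu i)
      (fun j _ => hX.eigenvalues_nonneg j)
    simpa [smul_eq_mul] using this
  have hdouble : ∑ j, f (μ j) = ∑ i, ∑ j, w i j * f (μ j) := by
    calc ∑ j, f (μ j) = ∑ j, (∑ i, w i j) * f (μ j) := by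
          refine Finset.sum_congr rfl fun j _ => ?_
          rw [show ∑ i, w i j = 1 from unit_row_sum hWu j, one_mul]
      _ = ∑ i, ∑ j, w i j * f (μ j) := by
          simp_rw [Finset.sum_mul]; rw [Finset.sum_comm]
  have hsum : ∑ i, ∑ j, w i j * f (μ j) = ∑ i, f (a i) := by
    rw [← hdouble, ← heq]
  have hterm : ∀ i ∈ Finset.univ, ∑ j, w i j * f (μ j) = f (a i) :=
    (Finset.sum_eq_sum_iff_of_le (fun i _ => jensen i)).mp hsum
  -- pointwise eigen-relation
  have key : ∀ i j, ((μ j : ℝ) : ℂ) * W j i = ((a i : ℝ) : ℂ) * W j i := by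
    intro i j
    by_cases hzero : w i j = 0
    · have : W j i = 0 := Complex.normSq_eq_zero.mp hzero
      rw [this, mul_zero, mul_zero]
    · -- j is in the support
      set s : Finset n := Finset.univ.filter (fun k => w i k ≠ 0) with hs
      have hjmem : j ∈ s := Finset.mem_filter.mpr ⟨Finset.mem_univ j, hzero⟩
      have hsw : ∑ k ∈ s, w i k = 1 := by
        rw [hs, Finset.sum_filter_ne_zero, unit_col_sum hWu i]
      have hsmean : ∑ k ∈ s, w i k • μ k = a i := by
        rw [hs]
        have : ∑ k ∈ Finset.univ.filter (fun k => w i k ≠ 0), w i k * μ k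
            = ∑ k, w i k * μ k :=
          Finset.sum_filter_of_ne (fun k _ h => by
            intro h0; exact h (by rw [h0, zero_mul]))
        simpa [smul_eq_mul, ← hre i] using this
      have hsf : ∑ k ∈ s, w i k • f (μ k) = f (a i) := by
        rw [hs]
        have : ∑ k ∈ Finset.univ.filter (fun k => w i k ≠ 0), w i k * f (μ k)
            = ∑ k, w i k * f (μ k) :=
          Finset.sum_filter_of_ne (fun k _ h => by
            intro h0; exact h (by rw [h0, zero_mul]))
        simpa [smul_eq_mul, hterm i (Finset.mem_univ i)] using this
      have hall := hf.eq_of_map_sum_eq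
        (fun k hk => lt_of_le_of_ne (Complex.normSq_nonneg _)
          (Ne.symm (Finset.mem_filter.mp hk).2))
        hsw (fun k _ => hX.eigenvalues_nonneg k) (by rw [hsmean, hsf])
      have hμa : μ j = a i := by
        have hconst : ∀ k ∈ s, μ k = μ j := fun k hk => hall hk hjmem
        have : a i = ∑ k ∈ s, w i k * μ j := by
          rw [← hsmean]
          exact Finset.sum_congr rfl fun k hk => by rw [smul_eq_mul, hconst k hk]
        rw [this, ← Finset.sum_mul, hsw, one_mul]
      rw [hμa]
  -- assemble the matrix identity
  have hDW : Matrix.diagonal (RCLike.ofReal ∘ μ) * W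
      = W * Matrix.diagonal (fun i => ((a i : ℝ) : ℂ)) := by
    ext j i
    rw [Matrix.diagonal_mul, Matrix.mul_diagonal]
    have := key i j
    simp only [Function.comp_apply]
    rw [show (RCLike.ofReal (μ j) : ℂ) = ((μ j : ℝ) : ℂ) from rfl, this, mul_comm]
  have hWW : star W * W = 1 := Matrix.UnitaryGroup.star_mul_self ⟨W, hWu⟩
  have hmain : star V * X * V = Matrix.diagonal (fun i => ((a i : ℝ) : ℂ)) := by
    rw [conj_repr hX.1 V, Matrix.mul_assoc, hDW, ← Matrix.mul_assoc, hWW, one_mul]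
  rw [hmain]
  simp [Matrix.diagonal_apply_eq]

lemma conj_psd {X : Matrix n n ℂ} (hX : X.PosSemidef) (V : Matrix n n ℂ) :
    (star V * X * V).PosSemidef := by
  have := hX.mul_mul_conjTranspose_same (star V)
  rwa [Matrix.star_eq_conjTranspose, Matrix.conjTranspose_conjTranspose] at this

lemma key_le {f : ℝ → ℝ} (hf : ConcaveOn ℝ (Set.Ici 0) f)
    {X Y : Matrix n n ℂ} (hX : X.PosSemidef) (hY : Y.PosSemidef)
    {t : ℝ} (ht0 : 0 ≤ t) (ht1 : t ≤ 1)
    (hZ : ((t : ℂ) • X + ((1 - t : ℝ) : ℂ) • Y).PosSemidef) :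
    t * ∑ j, f (hX.1.eigenvalues j) + (1 - t) * ∑ j, f (hY.1.eigenvalues j)
      ≤ ∑ i, f (hZ.1.eigenvalues i) := by
  classical
  set Z : Matrix n n ℂ := (t : ℂ) • X + ((1 - t : ℝ) : ℂ) • Y with hZdef
  set V : Matrix n n ℂ := (hZ.1.eigenvectorUnitary : Matrix n n ℂ) with hV
  have hVu : V ∈ Matrix.unitaryGroup n ℂ := (hZ.1.eigenvectorUnitary).2
  set a : n → ℝ := fun i => ((star V * X * V) i i).re with ha
  set b : n → ℝ := fun i => ((star V * Y * V) i i).re with hb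
  have hXc : (star V * X * V).PosSemidef := conj_psd hX V
  have hYc : (star V * Y * V).PosSemidef := conj_psd hY V
  have ha0 : ∀ i, 0 ≤ a i := fun i => psd_diag_re_nonneg hXc i
  have hb0 : ∀ i, 0 ≤ b i := fun i => psd_diag_re_nonneg hYc i
  have hsplit : ∀ i, hZ.1.eigenvalues i = t * a i + (1 - t) * b i := by
    intro i
    have hdiag : star V * Z * V = Matrix.diagonal (RCLike.ofReal ∘ hZ.1.eigenvalues) :=
      by have := hZ.1.conjStarAlgAut_star_eigenvectorUnitary; rw [Unitary.conjStarAlgAut_star_apply] at this; exact this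
    have h1 : (star V * Z * V) i i = ((hZ.1.eigenvalues i : ℝ) : ℂ) := by
      rw [hdiag, Matrix.diagonal_apply_eq]; rfl
    have h2 : star V * Z * V = (t : ℂ) • (star V * X * V)
        + ((1 - t : ℝ) : ℂ) • (star V * Y * V) := by
      rw [hZdef]
      simp only [Matrix.mul_add, Matrix.add_mul, Matrix.mul_smul, Matrix.smul_mul]
    have h3 := congrArg Complex.re h1
    rw [h2] at h3
    simp only [Matrix.add_apply, Matrix.smul_apply, smul_eq_mul, Complex.add_re,
      Complex.ofReal_re, Complex.re_ofReal_mul] at h3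
    rw [← h3]
  have hpt : ∀ i, t * f (a i) + (1 - t) * f (b i) ≤ f (hZ.1.eigenvalues i) := by
    intro i
    rw [hsplit i]
    have := hf.2 (Set.mem_Ici.mpr (ha0 i)) (Set.mem_Ici.mpr (hb0 i)) ht0
      (show (0:ℝ) ≤ 1 - t by linarith) (by ring)
    simpa [smul_eq_mul] using this
  calc t * ∑ j, f (hX.1.eigenvalues j) + (1 - t) * ∑ j, f (hY.1.eigenvalues j)
      ≤ t * ∑ i, f (a i) + (1 - t) * ∑ i, f (b i) := by
        have h1 := peierls_le hf hX hVu
        have h2 := peierls_le hf hY hVu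
        have := mul_le_mul_of_nonneg_left h1 ht0
        have := mul_le_mul_of_nonneg_left h2 (by linarith : (0:ℝ) ≤ 1 - t)
        gcongr
    _ = ∑ i, (t * f (a i) + (1 - t) * f (b i)) := by
        rw [Finset.sum_add_distrib, Finset.mul_sum, Finset.mul_sum]
    _ ≤ ∑ i, f (hZ.1.eigenvalues i) := Finset.sum_le_sum fun i _ => hpt i

lemma key_eq {f : ℝ → ℝ} (hf : StrictConcaveOn ℝ (Set.Ici 0) f)
    {X Y : Matrix n n ℂ} (hX : X.PosSemidef) (hY : Y.PosSemidef)
    {t : ℝ} (ht0 : 0 < t) (ht1 : t < 1)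
    (hZ : ((t : ℂ) • X + ((1 - t : ℝ) : ℂ) • Y).PosSemidef)
    (heq : t * ∑ j, f (hX.1.eigenvalues j) + (1 - t) * ∑ j, f (hY.1.eigenvalues j)
      = ∑ i, f (hZ.1.eigenvalues i)) : X = Y := by
  classical
  set Z : Matrix n n ℂ := (t : ℂ) • X + ((1 - t : ℝ) : ℂ) • Y with hZdef
  set V : Matrix n n ℂ := (hZ.1.eigenvectorUnitary : Matrix n n ℂ) with hV
  have hVu : V ∈ Matrix.unitaryGroup n ℂ := (hZ.1.eigenvectorUnitary).2
  set a : n → ℝ := fun i => ((star V * X * V) i i).re with ha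
  set b : n → ℝ := fun i => ((star V * Y * V) i i).re with hb
  have hXc : (star V * X * V).PosSemidef := conj_psd hX V
  have hYc : (star V * Y * V).PosSemidef := conj_psd hY V
  have ha0 : ∀ i, 0 ≤ a i := fun i => psd_diag_re_nonneg hXc i
  have hb0 : ∀ i, 0 ≤ b i := fun i => psd_diag_re_nonneg hYc i
  have hsplit : ∀ i, hZ.1.eigenvalues i = t * a i + (1 - t) * b i := by
    intro i
    have hdiag : star V * Z * V = Matrix.diagonal (RCLike.ofReal ∘ hZ.1.eigenvalues) :=
      by have := hZ.1.conjStarAlgAut_star_eigenvectorUnitary; rw [Unitary.conjStarAlgAut_star_apply] at this; exact this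
    have h1 : (star V * Z * V) i i = ((hZ.1.eigenvalues i : ℝ) : ℂ) := by
      rw [hdiag, Matrix.diagonal_apply_eq]; rfl
    have h2 : star V * Z * V = (t : ℂ) • (star V * X * V)
        + ((1 - t : ℝ) : ℂ) • (star V * Y * V) := by
      rw [hZdef]
      simp only [Matrix.mul_add, Matrix.add_mul, Matrix.mul_smul, Matrix.smul_mul]
    have h3 := congrArg Complex.re h1
    rw [h2] at h3
    simp only [Matrix.add_apply, Matrix.smul_apply, smul_eq_mul, Complex.add_re,
      Complex.ofReal_re, Complex.re_ofReal_mul] at h3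
    rw [← h3]
  have hpt : ∀ i, t * f (a i) + (1 - t) * f (b i) ≤ f (hZ.1.eigenvalues i) := by
    intro i
    rw [hsplit i]
    have := hf.concaveOn.2 (Set.mem_Ici.mpr (ha0 i)) (Set.mem_Ici.mpr (hb0 i)) ht0.le
      (show (0:ℝ) ≤ 1 - t by linarith) (by ring)
    simpa [smul_eq_mul] using this
  have h1 : ∑ j, f (hX.1.eigenvalues j) ≤ ∑ i, f (a i) :=
    peierls_le hf.concaveOn hX hVu
  have h2 : ∑ j, f (hY.1.eigenvalues j) ≤ ∑ i, f (b i) :=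
    peierls_le hf.concaveOn hY hVu
  have hMsum : t * ∑ i, f (a i) + (1 - t) * ∑ i, f (b i)
      = ∑ i, (t * f (a i) + (1 - t) * f (b i)) := by
    rw [Finset.sum_add_distrib, Finset.mul_sum, Finset.mul_sum]
  have hB : ∑ i, (t * f (a i) + (1 - t) * f (b i)) ≤ ∑ i, f (hZ.1.eigenvalues i) :=
    Finset.sum_le_sum fun i _ => hpt i
  -- all inequalities are equalities
  have hta : t * ∑ j, f (hX.1.eigenvalues j) ≤ t * ∑ i, f (a i) :=
    mul_le_mul_of_nonneg_left h1 ht0.le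
  have htb : (1 - t) * ∑ j, f (hY.1.eigenvalues j) ≤ (1 - t) * ∑ i, f (b i) :=
    mul_le_mul_of_nonneg_left h2 (by linarith)
  have hMR : ∑ i, (t * f (a i) + (1 - t) * f (b i)) = ∑ i, f (hZ.1.eigenvalues i) := by
    have hLM : t * ∑ j, f (hX.1.eigenvalues j) + (1 - t) * ∑ j, f (hY.1.eigenvalues j)
        ≤ ∑ i, (t * f (a i) + (1 - t) * f (b i)) := by
      rw [← hMsum]; linarith
    rw [← heq] at hB
    linarith [hB, hLM]
  have hLM' : t * ∑ i, f (a i) + (1 - t) * ∑ i, f (b i)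
      = t * ∑ j, f (hX.1.eigenvalues j) + (1 - t) * ∑ j, f (hY.1.eigenvalues j) := by
    rw [hMsum, hMR, ← heq]
  have e1 : ∑ i, f (a i) = ∑ j, f (hX.1.eigenvalues j) := by
    have h1' : t * ∑ i, f (a i) = t * ∑ j, f (hX.1.eigenvalues j) := by linarith
    exact mul_left_cancel₀ (ne_of_gt ht0) h1'
  have e2 : ∑ i, f (b i) = ∑ j, f (hY.1.eigenvalues j) := by
    have h2' : (1 - t) * ∑ i, f (b i) = (1 - t) * ∑ j, f (hY.1.eigenvalues j) := by linarith
    exact mul_left_cancel₀ (by linarith : (1 - t : ℝ) ≠ 0) h2'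
  -- termwise equality in the pointwise concavity step
  have hterm : ∀ i ∈ Finset.univ, t * f (a i) + (1 - t) * f (b i) = f (hZ.1.eigenvalues i) :=
    (Finset.sum_eq_sum_iff_of_le (fun i _ => hpt i)).mp hMR
  have hab : ∀ i, a i = b i := by
    intro i
    by_contra hne
    have hlt := hf.2 (Set.mem_Ici.mpr (ha0 i)) (Set.mem_Ici.mpr (hb0 i)) hne ht0
      (show (0:ℝ) < 1 - t by linarith) (by ring)
    have := hterm i (Finset.mem_univ i)
    rw [hsplit i] at this
    simp only [smul_eq_mul] at hlt
    linarith
  -- Peierls equality forces both conjugated matrices to be diagonal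
  have hXd := peierls_eq hf hX hVu e1
  have hYd := peierls_eq hf hY hVu e2
  have hdiag_eq : star V * X * V = star V * Y * V := by
    rw [hXd, hYd]
    have hfun : (fun i => ((((star V * X * V) i i).re : ℝ) : ℂ))
        = fun i => ((((star V * Y * V) i i).re : ℝ) : ℂ) := by
      funext i
      rw [show ((star V * X * V) i i).re = a i from rfl,
        show ((star V * Y * V) i i).re = b i from rfl, hab i]
    rw [hfun]
  -- cancel the unitary conjugation
  have hVV : V * star V = 1 := Matrix.mem_unitaryGroup_iff.mp hVu
  have hcanc : ∀ P : Matrix n n ℂ, V * (star V * P * V) * star V = P := by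
    intro P
    calc V * (star V * P * V) * star V = (V * star V) * P * (V * star V) := by
          simp only [Matrix.mul_assoc]
      _ = P := by rw [hVV, one_mul, mul_one]
  have := congrArg (fun M => V * M * star V) hdiag_eq
  simpa only [hcanc] using this

lemma trace_matRPow {m : ℕ} {S : Matrix (Fin m) (Fin m) ℂ} (hS : S.IsHermitian) (c : ℝ) :
    Matrix.trace (matRPow S c) = ((∑ i, hS.eigenvalues i ^ c : ℝ) : ℂ) := by
  rw [show matRPow S c = cfc (fun t : ℝ => t ^ c) S from rfl, hS.cfc_eq, Matrix.IsHermitian.cfc, Unitary.conjStarAlgAut_apply, Matrix.trace_mul_cycle,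
    Matrix.UnitaryGroup.star_mul_self, one_mul, Matrix.trace_diagonal]
  push_cast
  rfl
end Aux

/-- **Concavity of `B ↦ trace((A⁻¹ B A⁻*)^{1−1/ν})`.**
Let `ν ≥ 2` be an integer and `A` a nonsingular `m × m` complex matrix. The function
`f_A(B) := trace((A⁻¹ B A^{-*})^{1−1/ν})` (matrix power via the continuous functional
calculus) is real-valued on Hermitian positive semidefinite matrices `B`, is concave
there, and is strictly concave on Hermitian positive definite matrices. -/
theorem concave_trace_rpow_congruence
    {m : ℕ} (hm : 1 ≤ m) (ν : ℕ) (hν : 2 ≤ ν)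
    (A : Matrix (Fin m) (Fin m) ℂ) (hA : IsUnit A.det) :
    -- real-valued on Hermitian positive semidefinite matrices
    (∀ B : Matrix (Fin m) (Fin m) ℂ, B.PosSemidef →
      (Matrix.trace (matRPow (A⁻¹ * B * (Aᴴ)⁻¹) (1 - 1 / (ν : ℝ)))).im = 0) ∧
    -- concave on Hermitian positive semidefinite matrices
    (∀ B₁ B₂ : Matrix (Fin m) (Fin m) ℂ, B₁.PosSemidef → B₂.PosSemidef →
      ∀ t : ℝ, t ∈ Set.Icc (0 : ℝ) 1 →
        t * (Matrix.trace (matRPow (A⁻¹ * B₁ * (Aᴴ)⁻¹) (1 - 1 / (ν : ℝ)))).re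
          + (1 - t) * (Matrix.trace (matRPow (A⁻¹ * B₂ * (Aᴴ)⁻¹) (1 - 1 / (ν : ℝ)))).re
        ≤ (Matrix.trace (matRPow
            (A⁻¹ * ((t : ℂ) • B₁ + ((1 - t : ℝ) : ℂ) • B₂) * (Aᴴ)⁻¹)
            (1 - 1 / (ν : ℝ)))).re) ∧
    -- strictly concave on Hermitian positive definite matrices
    (∀ B₁ B₂ : Matrix (Fin m) (Fin m) ℂ, B₁.PosDef → B₂.PosDef → B₁ ≠ B₂ →
      ∀ t : ℝ, t ∈ Set.Ioo (0 : ℝ) 1 →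
        t * (Matrix.trace (matRPow (A⁻¹ * B₁ * (Aᴴ)⁻¹) (1 - 1 / (ν : ℝ)))).re
          + (1 - t) * (Matrix.trace (matRPow (A⁻¹ * B₂ * (Aᴴ)⁻¹) (1 - 1 / (ν : ℝ)))).re
        < (Matrix.trace (matRPow
            (A⁻¹ * ((t : ℂ) • B₁ + ((1 - t : ℝ) : ℂ) • B₂) * (Aᴴ)⁻¹)
            (1 - 1 / (ν : ℝ)))).re) := by
  have hν' : (2 : ℝ) ≤ (ν : ℝ) := by exact_mod_cast hν
  have hp0 : 0 < 1 - 1 / (ν : ℝ) := by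
    have h2 : 1 / (ν : ℝ) ≤ 1 / 2 := by
      apply one_div_le_one_div_of_le <;> linarith
    linarith
  have hp1 : 1 - 1 / (ν : ℝ) < 1 := by
    have : 0 < 1 / (ν : ℝ) := by
      apply one_div_pos.mpr; linarith
    linarith
  have hf := Real.strictConcaveOn_rpow hp0 hp1
  have hAi : (Aᴴ)⁻¹ = (A⁻¹)ᴴ := (Matrix.conjTranspose_nonsing_inv A).symm
  have hC : ∀ B : Matrix (Fin m) (Fin m) ℂ, B.PosSemidef →
      (A⁻¹ * B * (Aᴴ)⁻¹).PosSemidef := by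
    intro B hB
    rw [hAi]
    exact hB.mul_mul_conjTranspose_same A⁻¹
  have hAd : IsUnit (Aᴴ).det := by rw [Matrix.det_conjTranspose]; exact hA.star
  have hrecover : ∀ B : Matrix (Fin m) (Fin m) ℂ, A * (A⁻¹ * B * (Aᴴ)⁻¹) * Aᴴ = B := by
    intro B
    calc A * (A⁻¹ * B * (Aᴴ)⁻¹) * Aᴴ = (A * A⁻¹) * B * ((Aᴴ)⁻¹ * Aᴴ) := by
          simp only [Matrix.mul_assoc]
      _ = B := by rw [Matrix.mul_nonsing_inv A hA, Matrix.nonsing_inv_mul _ hAd,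
              one_mul, mul_one]
  refine ⟨?_, ?_, ?_⟩
  · intro B hB
    rw [trace_matRPow (hC B hB).1]
    exact Complex.ofReal_im _
  · intro B₁ B₂ h1 h2 t ht
    obtain ⟨ht0, ht1⟩ := ht
    have hX := hC B₁ h1
    have hY := hC B₂ h2
    have hZeq : A⁻¹ * ((t : ℂ) • B₁ + ((1 - t : ℝ) : ℂ) • B₂) * (Aᴴ)⁻¹
        = (t : ℂ) • (A⁻¹ * B₁ * (Aᴴ)⁻¹) + ((1 - t : ℝ) : ℂ) • (A⁻¹ * B₂ * (Aᴴ)⁻¹) := by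
      simp only [Matrix.mul_add, Matrix.add_mul, Matrix.mul_smul, Matrix.smul_mul]
    have hZ : ((t : ℂ) • (A⁻¹ * B₁ * (Aᴴ)⁻¹)
        + ((1 - t : ℝ) : ℂ) • (A⁻¹ * B₂ * (Aᴴ)⁻¹)).PosSemidef :=
      (psd_smul_real ht0 hX).add (psd_smul_real (by linarith) hY)
    rw [hZeq, trace_matRPow hZ.1, trace_matRPow hX.1, trace_matRPow hY.1]
    simp only [Complex.ofReal_re]
    exact key_le hf.concaveOn hX hY ht0 ht1 hZ
  · intro B₁ B₂ h1 h2 hne t ht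
    obtain ⟨ht0, ht1⟩ := ht
    have hX := hC B₁ h1.posSemidef
    have hY := hC B₂ h2.posSemidef
    have hXY : A⁻¹ * B₁ * (Aᴴ)⁻¹ ≠ A⁻¹ * B₂ * (Aᴴ)⁻¹ := by
      intro h
      apply hne
      have := congrArg (fun M => A * M * Aᴴ) h
      simpa only [hrecover] using this
    have hZeq : A⁻¹ * ((t : ℂ) • B₁ + ((1 - t : ℝ) : ℂ) • B₂) * (Aᴴ)⁻¹
        = (t : ℂ) • (A⁻¹ * B₁ * (Aᴴ)⁻¹) + ((1 - t : ℝ) : ℂ) • (A⁻¹ * B₂ * (Aᴴ)⁻¹) := by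
      simp only [Matrix.mul_add, Matrix.add_mul, Matrix.mul_smul, Matrix.smul_mul]
    have hZ : ((t : ℂ) • (A⁻¹ * B₁ * (Aᴴ)⁻¹)
        + ((1 - t : ℝ) : ℂ) • (A⁻¹ * B₂ * (Aᴴ)⁻¹)).PosSemidef :=
      (psd_smul_real ht0.le hX).add (psd_smul_real (by linarith [ht1]) hY)
    rw [hZeq, trace_matRPow hZ.1, trace_matRPow hX.1, trace_matRPow hY.1]
    simp only [Complex.ofReal_re]
    have hle := key_le hf.concaveOn hX hY ht0.le ht1.le hZ
    exact lt_of_le_of_ne hle fun heq => hXY (key_eq hf hX hY ht0 ht1 hZ heq)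
end

section
/- Let ν ≥ 2 be an integer, Ψ₀ an m×m Hermitian positive definite matrix factored as Ψ₀ = W·W^* with W nonsingular, and R an m×m Hermitian positive definite matrix. Then the real-valued function B ↦ (ν²/(1−ν))·trace((W^{−1} B W^{−*})^{1−1/ν}) + ν·trace(R·B), defined on m×m Hermitian positive semidefinite matrices B (matrix power via continuous functional calculus), attains its minimum at the unique minimizer B° = Ψ₀·(R·Ψ₀)^{−ν}. -/
open Matrix ComplexOrder

/-- The pointwise objective
`B ↦ (ν²/(1−ν))·trace((W⁻¹ B W⁻*)^{1−1/ν}) + ν·trace(R·B)` (real value). -/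
noncomputable def pointObj {m : ℕ} (ν : ℕ) (W R B : Matrix (Fin m) (Fin m) ℂ) : ℝ :=
  ((ν : ℝ) ^ 2 / (1 - (ν : ℝ))) *
      (Matrix.trace (matRPow (W⁻¹ * B * (Wᴴ)⁻¹) (1 - 1 / (ν : ℝ)))).re
    + (ν : ℝ) * (Matrix.trace (R * B)).re

section Aux

/-! ### Scalar lemmas -/

private lemma polyIdent (n : ℕ) (x : ℝ) :
    (n : ℝ) * x ^ (n + 1) - ((n : ℝ) + 1) * x ^ n + 1
      = (x - 1) ^ 2 * ∑ k ∈ Finset.range n, ((k : ℝ) + 1) * x ^ k := by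
  induction n with
  | zero => simp
  | succ n ih =>
    rw [Finset.sum_range_succ, mul_add, ← ih]
    push_cast
    ring

private lemma polyNonneg (n : ℕ) {x : ℝ} (hx : 0 ≤ x) :
    0 ≤ (n : ℝ) * x ^ (n + 1) - ((n : ℝ) + 1) * x ^ n + 1 := by
  rw [polyIdent]; positivity

private lemma polyPos {n : ℕ} (hn : 1 ≤ n) {x : ℝ} (hx : 0 ≤ x) (hx1 : x ≠ 1) :
    0 < (n : ℝ) * x ^ (n + 1) - ((n : ℝ) + 1) * x ^ n + 1 := by
  rw [polyIdent]
  have h1 : (1 : ℝ) ≤ ∑ k ∈ Finset.range n, ((k : ℝ) + 1) * x ^ k :=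
    calc (1 : ℝ) = (((0 : ℕ) : ℝ) + 1) * x ^ 0 := by simp
    _ ≤ _ := Finset.single_le_sum (f := fun k : ℕ => ((k : ℝ) + 1) * x ^ k)
          (fun k _ => by positivity) (Finset.mem_range.mpr hn)
  have h2 : 0 < (x - 1) ^ 2 := by
    have : x - 1 ≠ 0 := sub_ne_zero.mpr hx1
    positivity
  nlinarith

private lemma scalarIdent (n : ℕ) (hn : 1 ≤ n) {l s : ℝ} (hl : 0 ≤ l) (hs : 0 < s) :
    (n:ℝ) * s ^ n *
      (((((n:ℝ)+1) ^ 2 / (1 - ((n:ℝ)+1))) * l ^ (1 - 1 / ((n:ℝ)+1)) + ((n:ℝ)+1) * (s * l))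
        - ((((n:ℝ)+1) ^ 2 / (1 - ((n:ℝ)+1))) + ((n:ℝ)+1)) * (s ^ n)⁻¹)
      = (((n:ℝ)+1)) *
        ((n : ℝ) * (s * l ^ ((((n:ℝ)+1))⁻¹ : ℝ)) ^ (n + 1)
          - ((n : ℝ) + 1) * (s * l ^ ((((n:ℝ)+1))⁻¹ : ℝ)) ^ n + 1) := by
  have hn0 : ((n:ℝ)) ≠ 0 := by positivity
  have hn1 : ((n:ℝ)+1) ≠ 0 := by positivity
  have hc : (((n:ℝ)+1) ^ 2 / (1 - ((n:ℝ)+1))) = -(((n:ℝ)+1)^2 * ((n:ℝ))⁻¹) := by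
    rw [show (1 - ((n:ℝ)+1)) = -(n:ℝ) by ring, div_neg, div_eq_mul_inv]
  set u : ℝ := l ^ ((((n:ℝ)+1))⁻¹ : ℝ) with hu_def
  have hu : 0 ≤ u := Real.rpow_nonneg hl _
  have hl_eq : u ^ (n + 1) = l := by
    rw [hu_def, ← Real.rpow_natCast (l ^ ((((n:ℝ)+1))⁻¹ : ℝ)) (n+1), ← Real.rpow_mul hl]
    push_cast
    rw [inv_mul_cancel₀ hn1, Real.rpow_one]
  have hlp : l ^ (1 - 1 / ((n:ℝ)+1)) = u ^ n := by
    have h1 : (1 - 1 / ((n:ℝ)+1)) = ((((n:ℝ)+1))⁻¹) * (n : ℝ) := by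
      field_simp
      ring
    rw [h1, Real.rpow_mul hl, Real.rpow_natCast]
  have hnw : (n:ℝ) * ((n:ℝ))⁻¹ = 1 := mul_inv_cancel₀ hn0
  have hsz : s ^ n * (s ^ n)⁻¹ = 1 := mul_inv_cancel₀ (by positivity)
  rw [hc, hlp, ← hl_eq, mul_pow, mul_pow, pow_succ u n, pow_succ s n]
  linear_combination ((((n:ℝ)+1)^2 * s^n) * ((s^n)⁻¹ - u^n)) * hnw + ((n:ℝ)+1) * hsz

private lemma scalarKey_le (ν : ℕ) (hν : 2 ≤ ν) {l s : ℝ} (hl : 0 ≤ l) (hs : 0 < s) :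
    ((ν:ℝ)^2/(1-(ν:ℝ)) + ν) * (s ^ (ν-1))⁻¹
      ≤ (ν:ℝ)^2/(1-(ν:ℝ)) * l ^ (1 - 1/(ν:ℝ)) + (ν:ℝ)*(s*l) := by
  obtain ⟨n, rfl⟩ : ∃ n, ν = n + 1 := ⟨ν - 1, by omega⟩
  have hn : 1 ≤ n := by omega
  have hcast : ((n+1 : ℕ) : ℝ) = (n:ℝ) + 1 := by push_cast; ring
  have hns : (0:ℝ) < (n:ℝ) * s ^ n := by
    have : (0:ℝ) < (n:ℝ) := by exact_mod_cast hn
    positivity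
  have hid := scalarIdent n hn hl hs
  have hP := polyNonneg n (x := s * l ^ ((((n:ℝ)+1))⁻¹ : ℝ))
    (mul_nonneg hs.le (Real.rpow_nonneg hl _))
  have hNP : 0 ≤ (((n:ℝ)+1)) *
        ((n : ℝ) * (s * l ^ ((((n:ℝ)+1))⁻¹ : ℝ)) ^ (n + 1)
          - ((n : ℝ) + 1) * (s * l ^ ((((n:ℝ)+1))⁻¹ : ℝ)) ^ n + 1) :=
    mul_nonneg (by positivity) hP
  rw [← hid] at hNP
  simp only [hcast, Nat.add_sub_cancel]
  nlinarith [hNP, hns]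

private lemma scalarKey_eq (ν : ℕ) (hν : 2 ≤ ν) {l s : ℝ} (hl : 0 ≤ l) (hs : 0 < s)
    (heq : (ν:ℝ)^2/(1-(ν:ℝ)) * l ^ (1 - 1/(ν:ℝ)) + (ν:ℝ)*(s*l)
      = ((ν:ℝ)^2/(1-(ν:ℝ)) + ν) * (s ^ (ν-1))⁻¹) :
    l = (s ^ ν)⁻¹ := by
  obtain ⟨n, rfl⟩ : ∃ n, ν = n + 1 := ⟨ν - 1, by omega⟩
  have hn : 1 ≤ n := by omega
  have hcast : ((n+1 : ℕ) : ℝ) = (n:ℝ) + 1 := by push_cast; ring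
  have hid := scalarIdent n hn hl hs
  simp only [hcast, Nat.add_sub_cancel] at heq
  rw [heq] at hid
  simp only [sub_self, mul_zero] at hid
  have hx1 : s * l ^ ((((n:ℝ)+1))⁻¹ : ℝ) = 1 := by
    by_contra hne
    have := polyPos hn (x := s * l ^ ((((n:ℝ)+1))⁻¹ : ℝ))
      (mul_nonneg hs.le (Real.rpow_nonneg hl _)) hne
    have hN : (0:ℝ) < (n:ℝ)+1 := by positivity
    nlinarith
  have hu : l ^ ((((n:ℝ)+1))⁻¹ : ℝ) = s⁻¹ := by
    field_simp at hx1 ⊢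
    linarith [hx1]
  have hup : (l ^ ((((n:ℝ)+1))⁻¹ : ℝ)) ^ (n+1) = l := by
    rw [show (((n:ℝ)+1))⁻¹ = (((n+1 : ℕ):ℝ))⁻¹ by push_cast; ring]
    exact Real.rpow_inv_natCast_pow hl (by omega)
  rw [hu] at hup
  rw [← hup, inv_pow]

/-! ### Matrix lemmas -/

private lemma mulStarSelf (z : ℂ) : z * star z = ((‖z‖ ^ 2 : ℝ) : ℂ) := by
  rw [Complex.star_def, Complex.mul_conj, Complex.normSq_eq_norm_sq]

variable {m : ℕ}

private lemma myConjPow {V D : Matrix (Fin m) (Fin m) ℂ} (hV2 : V * Vᴴ = 1)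
    (hV1 : Vᴴ * V = 1) (k : ℕ) : (V * D * Vᴴ) ^ k = V * D ^ k * Vᴴ := by
  induction k with
  | zero => simpa using hV2.symm
  | succ k ih =>
    rw [pow_succ, ih, pow_succ]
    calc V * D ^ k * Vᴴ * (V * D * Vᴴ) = V * D ^ k * (Vᴴ * V) * D * Vᴴ := by
          simp only [Matrix.mul_assoc]
    _ = V * (D ^ k * D) * Vᴴ := by rw [hV1]; simp only [Matrix.mul_assoc, Matrix.mul_one]

private lemma traceConj {V : Matrix (Fin m) (Fin m) ℂ} (hV1 : Vᴴ * V = 1)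
    (f : Fin m → ℂ) : Matrix.trace (V * diagonal f * Vᴴ) = ∑ j, f j := by
  rw [trace_mul_comm, ← Matrix.mul_assoc, hV1, Matrix.one_mul, trace_diagonal]

private lemma traceConjMulConj (V U : Matrix (Fin m) (Fin m) ℂ) (f g : Fin m → ℝ) :
    Matrix.trace ((V * diagonal (fun j => (f j : ℂ)) * Vᴴ) *
        (U * diagonal (fun i => (g i : ℂ)) * Uᴴ))
      = ∑ j, ∑ i, ((f j * g i * ‖(Vᴴ * U) j i‖ ^ 2 : ℝ) : ℂ) := by
  have h1 : (V * diagonal (fun j => (f j : ℂ)) * Vᴴ) * (U * diagonal (fun i => (g i : ℂ)) * Uᴴ)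
      = V * (diagonal (fun j => (f j : ℂ)) * (Vᴴ * U) * diagonal (fun i => (g i : ℂ)) * Uᴴ) := by
    simp only [Matrix.mul_assoc]
  rw [h1, trace_mul_comm]
  have h2 : diagonal (fun j => (f j : ℂ)) * (Vᴴ * U) * diagonal (fun i => (g i : ℂ)) * Uᴴ * V
      = diagonal (fun j => (f j : ℂ)) * (Vᴴ * U) * diagonal (fun i => (g i : ℂ)) * (Vᴴ * U)ᴴ := by
    rw [conjTranspose_mul, conjTranspose_conjTranspose]
    simp only [Matrix.mul_assoc]
  rw [h2, Matrix.trace]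
  congr 1
  ext j
  rw [Matrix.diag, Matrix.mul_apply]
  congr 1
  ext i
  rw [Matrix.mul_diagonal, Matrix.diagonal_mul, conjTranspose_apply]
  rw [show (f j : ℂ) * (Vᴴ * U) j i * (g i : ℂ) * star ((Vᴴ * U) j i)
      = (f j : ℂ) * (g i : ℂ) * ((Vᴴ * U) j i * star ((Vᴴ * U) j i)) from by ring,
    mulStarSelf]
  push_cast
  ring

private lemma sumNormSqRow {C : Matrix (Fin m) (Fin m) ℂ} (h : C * Cᴴ = 1) (j : Fin m) :
    ∑ i, ‖C j i‖ ^ 2 = 1 := by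
  have h1 : (C * Cᴴ) j j = 1 := by rw [h]; simp [Matrix.one_apply]
  rw [Matrix.mul_apply] at h1
  have h2 : ∀ i ∈ Finset.univ, C j i * Cᴴ i j = ((‖C j i‖ ^ 2 : ℝ) : ℂ) := fun i _ => by
    rw [conjTranspose_apply, mulStarSelf]
  rw [Finset.sum_congr rfl h2, ← Complex.ofReal_sum] at h1
  exact_mod_cast h1

private lemma sumNormSqCol {C : Matrix (Fin m) (Fin m) ℂ} (h : Cᴴ * C = 1) (i : Fin m) :
    ∑ j, ‖C j i‖ ^ 2 = 1 := by
  have h1 : (Cᴴ * C) i i = 1 := by rw [h]; simp [Matrix.one_apply]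
  rw [Matrix.mul_apply] at h1
  have h2 : ∀ j ∈ Finset.univ, Cᴴ i j * C j i = ((‖C j i‖ ^ 2 : ℝ) : ℂ) := fun j _ => by
    rw [conjTranspose_apply, mul_comm, mulStarSelf]
  rw [Finset.sum_congr rfl h2, ← Complex.ofReal_sum] at h1
  exact_mod_cast h1

private lemma posDefConj {A : Matrix (Fin m) (Fin m) ℂ} (hA : A.PosDef)
    (B : Matrix (Fin m) (Fin m) ℂ) (hB : IsUnit B.det) : (Bᴴ * A * B).PosDef := by
  exact hA.conjTranspose_mul_mul_same
    (Matrix.mulVec_injective_iff_isUnit.mpr (Matrix.isUnit_iff_isUnit_det B |>.mpr hB))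

private lemma rpowAux (ν : ℕ) (hν : 2 ≤ ν) {t : ℝ} (ht : 0 < t) :
    ((t ^ ν)⁻¹ : ℝ) ^ (1 - 1 / (ν : ℝ)) = (t ^ (ν - 1))⁻¹ := by
  have h1 : ((t ^ ν : ℝ))⁻¹ = t ^ (-(ν : ℝ)) := by
    rw [Real.rpow_neg ht.le, Real.rpow_natCast]
  have h2 : (-(ν : ℝ)) * (1 - 1 / (ν : ℝ)) = -(((ν - 1 : ℕ) : ℝ)) := by
    have h3 : ((ν - 1 : ℕ) : ℝ) = (ν : ℝ) - 1 := by
      rw [Nat.cast_sub (by omega)]; norm_num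
    rw [h3]
    have hν0 : (ν : ℝ) ≠ 0 := by positivity
    field_simp
  rw [h1, ← Real.rpow_natCast t (ν - 1), ← Real.rpow_neg ht.le, ← h2,
    Real.rpow_mul ht.le]

end Aux

/-- **The unique minimizer of the pointwise Lagrangian term.**
Let `ν ≥ 2` be an integer, `Ψ₀ = W·W*` Hermitian positive definite with `W` nonsingular,
and `R` Hermitian positive definite. Then the function
`B ↦ (ν²/(1−ν))·trace((W⁻¹ B W⁻*)^{1−1/ν}) + ν·trace(R·B)` on Hermitian positive
semidefinite matrices attains its minimum at the unique minimizer
`B° = Ψ₀·(R·Ψ₀)^{−ν}` (which is Hermitian positive definite). -/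
theorem pointObj_min_unique
    {m : ℕ} (hm : 1 ≤ m) (ν : ℕ) (hν : 2 ≤ ν)
    (Ψ₀ W R : Matrix (Fin m) (Fin m) ℂ)
    (hΨ₀ : Ψ₀.PosDef) (hW : IsUnit W.det) (hfact : Ψ₀ = W * Wᴴ)
    (hR : R.PosDef) :
    (Ψ₀ * ((R * Ψ₀)⁻¹) ^ ν).PosDef ∧
    (∀ B : Matrix (Fin m) (Fin m) ℂ, B.PosSemidef →
      pointObj ν W R (Ψ₀ * ((R * Ψ₀)⁻¹) ^ ν) ≤ pointObj ν W R B) ∧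
    (∀ B : Matrix (Fin m) (Fin m) ℂ, B.PosSemidef →
      pointObj ν W R B = pointObj ν W R (Ψ₀ * ((R * Ψ₀)⁻¹) ^ ν) →
      B = Ψ₀ * ((R * Ψ₀)⁻¹) ^ ν) := by
  classical
  -- invertibility facts
  have hWH : IsUnit Wᴴ.det := by
    rw [Matrix.det_conjTranspose]; exact hW.star
  have hWW : W * W⁻¹ = 1 := Matrix.mul_nonsing_inv W hW
  have hWW' : W⁻¹ * W = 1 := Matrix.nonsing_inv_mul W hW
  have hWHWH : Wᴴ * (Wᴴ)⁻¹ = 1 := Matrix.mul_nonsing_inv _ hWH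
  have hWHWH' : (Wᴴ)⁻¹ * Wᴴ = 1 := Matrix.nonsing_inv_mul _ hWH
  -- the matrix M and its spectral data
  have hM : (Wᴴ * R * W).PosDef := posDefConj hR W hW
  set M : Matrix (Fin m) (Fin m) ℂ := Wᴴ * R * W with hM_def
  have hMh : M.IsHermitian := hM.1
  set V : Matrix (Fin m) (Fin m) ℂ := (hMh.eigenvectorUnitary : Matrix (Fin m) (Fin m) ℂ)
    with hV_def
  set μ : Fin m → ℝ := hMh.eigenvalues with hμ_def
  have hμ : ∀ j, 0 < μ j := hM.eigenvalues_pos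
  have hV1 : Vᴴ * V = 1 := by
    have := Matrix.mem_unitaryGroup_iff'.mp hMh.eigenvectorUnitary.2
    simpa [star_eq_conjTranspose] using this
  have hV2 : V * Vᴴ = 1 := by
    have := Matrix.mem_unitaryGroup_iff.mp hMh.eigenvectorUnitary.2
    simpa [star_eq_conjTranspose] using this
  have hMspec : M = V * diagonal (fun j => (μ j : ℂ)) * Vᴴ := by
    conv_lhs => rw [hMh.spectral_theorem]
    rfl
  have hMcfc : ∀ f : ℝ → ℝ, cfc f M = V * diagonal (fun j => ((f (μ j) : ℝ) : ℂ)) * Vᴴ := by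
    intro f
    rw [hMh.cfc_eq]
    rfl
  have hVdet : IsUnit Vᴴ.det := by
    apply IsUnit.of_mul_eq_one V.det
    rw [← Matrix.det_mul, hV1, Matrix.det_one]
  -- the diagonal data
  set d : Fin m → ℝ := fun j => ((μ j) ^ ν)⁻¹ with hd_def
  have hd : ∀ j, 0 < d j := fun j => by
    have := hμ j; rw [hd_def]; positivity
  set e : Fin m → ℝ := fun j => ((μ j) ^ (ν - 1))⁻¹ with he_def
  set A₀ : Matrix (Fin m) (Fin m) ℂ := V * diagonal (fun j => (d j : ℂ)) * Vᴴ with hA₀_def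
  have hμ0 : ∀ j, ((μ j : ℂ)) ≠ 0 := fun j => by
    exact_mod_cast (hμ j).ne'
  have hMinv : M⁻¹ = V * diagonal (fun j => ((μ j : ℂ))⁻¹) * Vᴴ := by
    apply Matrix.inv_eq_right_inv
    calc M * (V * diagonal (fun j => ((μ j : ℂ))⁻¹) * Vᴴ)
        = V * (diagonal (fun j => (μ j : ℂ)) * (Vᴴ * V) * diagonal (fun j => ((μ j : ℂ))⁻¹)) * Vᴴ
          := by rw [hMspec]; simp only [Matrix.mul_assoc]
    _ = V * (diagonal (fun j => (μ j : ℂ)) * diagonal (fun j => ((μ j : ℂ))⁻¹)) * Vᴴ := by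
          rw [hV1, Matrix.mul_one]
    _ = V * Vᴴ := by
          rw [diagonal_mul_diagonal]
          congr 1
          rw [show (fun j => (μ j : ℂ) * ((μ j : ℂ))⁻¹) = fun _ => (1:ℂ) from
            funext fun j => mul_inv_cancel₀ (hμ0 j), diagonal_one, Matrix.mul_one]
    _ = 1 := hV2
  have hA₀eq : (M⁻¹) ^ ν = A₀ := by
    have hfun : (fun j => ((μ j : ℂ))⁻¹) ^ ν = fun j => ((d j : ℝ) : ℂ) := by
      funext j
      show ((μ j : ℂ))⁻¹ ^ ν = (((μ j ^ ν)⁻¹ : ℝ) : ℂ)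
      push_cast [inv_pow]
      ring
    rw [hMinv, myConjPow hV2 hV1, diagonal_pow, hfun, hA₀_def]
  -- B° = W * A₀ * Wᴴ
  have hMinv2 : W⁻¹ * R⁻¹ * (Wᴴ)⁻¹ = M⁻¹ := by
    rw [hM_def, Matrix.mul_inv_rev, Matrix.mul_inv_rev]
    simp only [Matrix.mul_assoc]
  have hBo : Ψ₀ * ((R * Ψ₀)⁻¹) ^ ν = W * A₀ * Wᴴ := by
    have h1 : (R * Ψ₀)⁻¹ = (Wᴴ)⁻¹ * (W⁻¹ * R⁻¹) := by
      rw [hfact, ← Matrix.mul_assoc, Matrix.mul_inv_rev, Matrix.mul_inv_rev]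
    have h2 : ∀ k : ℕ, ((Wᴴ)⁻¹ * (W⁻¹ * R⁻¹)) ^ k * (Wᴴ)⁻¹
        = (Wᴴ)⁻¹ * ((W⁻¹ * R⁻¹) * (Wᴴ)⁻¹) ^ k := by
      intro k
      induction k with
      | zero => simp
      | succ k ih =>
        calc ((Wᴴ)⁻¹ * (W⁻¹ * R⁻¹)) ^ (k+1) * (Wᴴ)⁻¹
            = (((Wᴴ)⁻¹ * (W⁻¹ * R⁻¹)) ^ k * (Wᴴ)⁻¹) * ((W⁻¹ * R⁻¹) * (Wᴴ)⁻¹) := by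
              rw [pow_succ]; simp only [Matrix.mul_assoc]
        _ = ((Wᴴ)⁻¹ * ((W⁻¹ * R⁻¹) * (Wᴴ)⁻¹) ^ k) * ((W⁻¹ * R⁻¹) * (Wᴴ)⁻¹) := by rw [ih]
        _ = (Wᴴ)⁻¹ * ((W⁻¹ * R⁻¹) * (Wᴴ)⁻¹) ^ (k+1) := by
              rw [pow_succ]; simp only [Matrix.mul_assoc]
    have h3 : ((Wᴴ)⁻¹ * (W⁻¹ * R⁻¹)) ^ ν
        = (Wᴴ)⁻¹ * ((W⁻¹ * R⁻¹) * (Wᴴ)⁻¹) ^ ν * Wᴴ := by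
      have h4 := congrArg (fun X => X * Wᴴ) (h2 ν)
      rw [Matrix.mul_assoc, hWHWH', Matrix.mul_one] at h4
      rw [h4]
    have h5 : (W⁻¹ * R⁻¹) * (Wᴴ)⁻¹ = M⁻¹ := by
      rw [← hMinv2]
    rw [h1, h3, h5, hA₀eq, hfact]
    calc W * Wᴴ * ((Wᴴ)⁻¹ * A₀ * Wᴴ) = W * ((Wᴴ * (Wᴴ)⁻¹) * A₀ * Wᴴ) := by
          simp only [Matrix.mul_assoc]
    _ = W * A₀ * Wᴴ := by rw [hWHWH, Matrix.one_mul, ← Matrix.mul_assoc]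
  -- positive definiteness of B°
  have hA₀pd : A₀.PosDef := by
    have hdiag : (diagonal (fun j => (d j : ℂ))).PosDef :=
      Matrix.PosDef.diagonal fun j => by
        have := hd j
        exact_mod_cast Complex.zero_lt_real.mpr this
    have := posDefConj hdiag Vᴴ hVdet
    rw [conjTranspose_conjTranspose] at this
    exact this
  have hBoPD : (Ψ₀ * ((R * Ψ₀)⁻¹) ^ ν).PosDef := by
    rw [hBo]
    have := posDefConj hA₀pd Wᴴ hWH
    rw [conjTranspose_conjTranspose] at this
    exact this
  -- value of pointObj at B°
  have hArg₀ : W⁻¹ * (W * A₀ * Wᴴ) * (Wᴴ)⁻¹ = A₀ := by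
    calc W⁻¹ * (W * A₀ * Wᴴ) * (Wᴴ)⁻¹ = (W⁻¹ * W) * (A₀ * (Wᴴ * (Wᴴ)⁻¹)) := by
          simp only [Matrix.mul_assoc]
    _ = A₀ := by rw [hWW', hWHWH, Matrix.mul_one, Matrix.one_mul]
  have hspecM : spectrum ℝ M = Set.range μ := Matrix.IsHermitian.spectrum_real_eq_range_eigenvalues hMh
  have hposM : ∀ x ∈ spectrum ℝ M, 0 < x := by
    rw [hspecM]
    rintro x ⟨j, rfl⟩
    exact hμ j
  have hA₀cfc : A₀ = cfc (fun t : ℝ => (t ^ ν)⁻¹) M := by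
    rw [hMcfc]
  have hmatR : matRPow A₀ (1 - 1 / (ν : ℝ)) = V * diagonal (fun j => (e j : ℂ)) * Vᴴ := by
    have hsa : IsSelfAdjoint M := hMh
    have hf : ContinuousOn (fun t : ℝ => (t ^ ν)⁻¹) (spectrum ℝ M) := fun t ht =>
      (((continuous_pow ν).continuousAt).inv₀ (pow_ne_zero _ (hposM t ht).ne')).continuousWithinAt
    have hg : ContinuousOn (fun t : ℝ => t ^ (1 - 1 / (ν : ℝ)))
        ((fun t : ℝ => (t ^ ν)⁻¹) '' spectrum ℝ M) := by
      rintro x ⟨t, ht, rfl⟩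
      have hx : (0:ℝ) < (t ^ ν)⁻¹ := by
        have := hposM t ht; positivity
      exact (Real.continuousAt_rpow_const _ _ (Or.inl hx.ne')).continuousWithinAt
    rw [matRPow, hA₀cfc,
      ← cfc_comp (fun t : ℝ => t ^ (1 - 1 / (ν : ℝ))) (fun t : ℝ => (t ^ ν)⁻¹) M hsa hg hf]
    have h2 : cfc ((fun t : ℝ => t ^ (1 - 1 / (ν : ℝ))) ∘ (fun t : ℝ => (t ^ ν)⁻¹)) M
        = cfc (fun t : ℝ => ((t ^ (ν - 1))⁻¹ : ℝ)) M :=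
      cfc_congr fun t ht => rpowAux ν hν (hposM t ht)
    rw [h2, hMcfc]
  have htr₀ : (Matrix.trace (matRPow A₀ (1 - 1 / (ν : ℝ)))).re = ∑ j, e j := by
    rw [hmatR, traceConj hV1, ← Complex.ofReal_sum, Complex.ofReal_re]
  have hμd : ∀ j, μ j * d j = e j := by
    intro j
    show μ j * (μ j ^ ν)⁻¹ = (μ j ^ (ν - 1))⁻¹
    have h6 : (μ j) ^ ν = (μ j) ^ (ν - 1) * μ j := by
      rw [← pow_succ]
      congr 1
      omega
    rw [h6, mul_inv]
    have := (hμ j).ne'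
    field_simp
  have htrR₀ : (Matrix.trace (R * (W * A₀ * Wᴴ))).re = ∑ j, e j := by
    have h5 : Matrix.trace (R * (W * A₀ * Wᴴ)) = Matrix.trace (M * A₀) := by
      calc Matrix.trace (R * (W * A₀ * Wᴴ)) = Matrix.trace ((R * W * A₀) * Wᴴ) := by
            simp only [Matrix.mul_assoc]
      _ = Matrix.trace (Wᴴ * (R * W * A₀)) := by rw [trace_mul_comm]
      _ = Matrix.trace (M * A₀) := by rw [hM_def]; simp only [Matrix.mul_assoc]
    have h6 : M * A₀ = V * diagonal (fun j => ((μ j * d j : ℝ) : ℂ)) * Vᴴ := by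
      calc M * A₀ = V * (diagonal (fun j => (μ j : ℂ)) * (Vᴴ * V) *
            diagonal (fun j => (d j : ℂ))) * Vᴴ := by
            rw [hMspec, hA₀_def]; simp only [Matrix.mul_assoc]
      _ = V * (diagonal (fun j => (μ j : ℂ)) * diagonal (fun j => (d j : ℂ))) * Vᴴ := by
            rw [hV1, Matrix.mul_one]
      _ = _ := by
            rw [diagonal_mul_diagonal]
            congr 1
            congr 1
            funext j
            push_cast
            ring
    rw [h5, h6, traceConj hV1]
    have h7 : ∀ j ∈ Finset.univ, ((μ j * d j : ℝ) : ℂ) = ((e j : ℝ) : ℂ) := fun j _ => by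
      rw [hμd j]
    rw [Finset.sum_congr rfl h7, ← Complex.ofReal_sum, Complex.ofReal_re]
  have hpointBo : pointObj ν W R (Ψ₀ * ((R * Ψ₀)⁻¹) ^ ν)
      = ((ν : ℝ) ^ 2 / (1 - (ν : ℝ)) + ν) * ∑ j, e j := by
    rw [hBo, pointObj, hArg₀, htr₀, htrR₀]
    ring
  -- the main estimate for arbitrary PSD B
  have main : ∀ B : Matrix (Fin m) (Fin m) ℂ, B.PosSemidef →
      ((ν : ℝ) ^ 2 / (1 - (ν : ℝ)) + ν) * (∑ j, e j) ≤ pointObj ν W R B ∧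
      (pointObj ν W R B = ((ν : ℝ) ^ 2 / (1 - (ν : ℝ)) + ν) * (∑ j, e j) →
        B = W * A₀ * Wᴴ) := by
    intro B hB
    set A : Matrix (Fin m) (Fin m) ℂ := W⁻¹ * B * (Wᴴ)⁻¹ with hA_def
    have hWHinv : (Wᴴ)⁻¹ = (W⁻¹)ᴴ := (Matrix.conjTranspose_nonsing_inv W).symm
    have hA : A.PosSemidef := by
      rw [hA_def, hWHinv]
      exact hB.mul_mul_conjTranspose_same W⁻¹
    have hAh : A.IsHermitian := hA.1
    set U : Matrix (Fin m) (Fin m) ℂ := (hAh.eigenvectorUnitary : Matrix (Fin m) (Fin m) ℂ)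
      with hU_def
    set lam : Fin m → ℝ := hAh.eigenvalues with hlam_def
    have hlam : ∀ i, 0 ≤ lam i := hA.eigenvalues_nonneg
    have hU1 : Uᴴ * U = 1 := by
      have := Matrix.mem_unitaryGroup_iff'.mp hAh.eigenvectorUnitary.2
      simpa [star_eq_conjTranspose] using this
    have hU2 : U * Uᴴ = 1 := by
      have := Matrix.mem_unitaryGroup_iff.mp hAh.eigenvectorUnitary.2
      simpa [star_eq_conjTranspose] using this
    have hAspec : A = U * diagonal (fun i => (lam i : ℂ)) * Uᴴ := by
      conv_lhs => rw [hAh.spectral_theorem]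
      rfl
    have hBA : B = W * A * Wᴴ := by
      rw [hA_def]
      calc B = (W * W⁻¹) * B * ((Wᴴ)⁻¹ * Wᴴ) := by
            rw [hWW, hWHWH', Matrix.one_mul, Matrix.mul_one]
      _ = W * (W⁻¹ * B * (Wᴴ)⁻¹) * Wᴴ := by simp only [Matrix.mul_assoc]
    set C : Matrix (Fin m) (Fin m) ℂ := Vᴴ * U with hC_def
    have hCC2 : C * Cᴴ = 1 := by
      rw [hC_def, conjTranspose_mul, conjTranspose_conjTranspose]
      calc Vᴴ * U * (Uᴴ * V) = Vᴴ * (U * Uᴴ) * V := by simp only [Matrix.mul_assoc]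
      _ = 1 := by rw [hU2, Matrix.mul_one, hV1]
    have hCC1 : Cᴴ * C = 1 := by
      rw [hC_def, conjTranspose_mul, conjTranspose_conjTranspose]
      calc Uᴴ * V * (Vᴴ * U) = Uᴴ * (V * Vᴴ) * U := by simp only [Matrix.mul_assoc]
      _ = 1 := by rw [hV2, Matrix.mul_one, hU1]
    have hCrow : ∀ j, ∑ i, ‖C j i‖ ^ 2 = 1 := sumNormSqRow hCC2
    have hCcol : ∀ i, ∑ j, ‖C j i‖ ^ 2 = 1 := sumNormSqCol hCC1
    have hAcfc : matRPow A (1 - 1 / (ν : ℝ))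
        = U * diagonal (fun i => ((lam i ^ (1 - 1 / (ν : ℝ)) : ℝ) : ℂ)) * Uᴴ := by
      rw [matRPow, hAh.cfc_eq]
      rfl
    have htrA : (Matrix.trace (matRPow A (1 - 1 / (ν : ℝ)))).re
        = ∑ i, lam i ^ (1 - 1 / (ν : ℝ)) := by
      rw [hAcfc, traceConj hU1, ← Complex.ofReal_sum, Complex.ofReal_re]
    have htrRB : (Matrix.trace (R * B)).re = ∑ j, ∑ i, μ j * lam i * ‖C j i‖ ^ 2 := by
      have h5 : Matrix.trace (R * B) = Matrix.trace (M * A) := by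
        rw [hBA]
        calc Matrix.trace (R * (W * A * Wᴴ)) = Matrix.trace ((R * W * A) * Wᴴ) := by
              simp only [Matrix.mul_assoc]
        _ = Matrix.trace (Wᴴ * (R * W * A)) := by rw [trace_mul_comm]
        _ = Matrix.trace (M * A) := by rw [hM_def]; simp only [Matrix.mul_assoc]
      rw [h5]
      conv_lhs => rw [hMspec, hAspec]
      rw [traceConjMulConj V U μ lam, ← hC_def]
      simp only [← Complex.ofReal_sum]
      rw [Complex.ofReal_re]
    -- pointObj B as a double sum
    have hpB : pointObj ν W R B = ∑ j, ∑ i, ‖C j i‖ ^ 2 *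
        ((ν : ℝ) ^ 2 / (1 - (ν : ℝ)) * lam i ^ (1 - 1 / (ν : ℝ)) + (ν : ℝ) * (μ j * lam i)) := by
      simp only [pointObj]
      rw [← hA_def, htrA, htrRB]
      have e1 : ∑ j, ∑ i, ‖C j i‖ ^ 2 *
          ((ν : ℝ) ^ 2 / (1 - (ν : ℝ)) * lam i ^ (1 - 1 / (ν : ℝ)))
          = (ν : ℝ) ^ 2 / (1 - (ν : ℝ)) * ∑ i, lam i ^ (1 - 1 / (ν : ℝ)) := by
        rw [Finset.sum_comm, Finset.mul_sum]
        refine Finset.sum_congr rfl fun i _ => ?_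
        rw [← Finset.sum_mul, hCcol i, one_mul]
      have e2 : ∑ j, ∑ i, ‖C j i‖ ^ 2 * ((ν : ℝ) * (μ j * lam i))
          = (ν : ℝ) * ∑ j, ∑ i, μ j * lam i * ‖C j i‖ ^ 2 := by
        rw [Finset.mul_sum]
        refine Finset.sum_congr rfl fun j _ => ?_
        rw [Finset.mul_sum]
        refine Finset.sum_congr rfl fun i _ => ?_
        ring
      simp only [mul_add, Finset.sum_add_distrib, e1, e2]
    -- target value as a double sum
    have hpBosum : ((ν : ℝ) ^ 2 / (1 - (ν : ℝ)) + ν) * (∑ j, e j)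
        = ∑ j, ∑ i, ‖C j i‖ ^ 2 * (((ν : ℝ) ^ 2 / (1 - (ν : ℝ)) + ν) * e j) := by
      rw [Finset.mul_sum]
      refine Finset.sum_congr rfl fun j _ => ?_
      rw [← Finset.sum_mul, hCrow j, one_mul]
    have hterm : ∀ j i, ((ν : ℝ) ^ 2 / (1 - (ν : ℝ)) + ν) * e j
        ≤ (ν : ℝ) ^ 2 / (1 - (ν : ℝ)) * lam i ^ (1 - 1 / (ν : ℝ)) + (ν : ℝ) * (μ j * lam i) := by
      intro j i
      have := scalarKey_le ν hν (hlam i) (hμ j)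
      simpa [he_def] using this
    constructor
    · rw [hpB, hpBosum]
      exact Finset.sum_le_sum fun j _ => Finset.sum_le_sum fun i _ =>
        mul_le_mul_of_nonneg_left (hterm j i) (by positivity)
    · intro heq
      rw [hpB, hpBosum] at heq
      have h0 : ∑ j, ∑ i, (‖C j i‖ ^ 2 *
            ((ν : ℝ) ^ 2 / (1 - (ν : ℝ)) * lam i ^ (1 - 1 / (ν : ℝ)) + (ν : ℝ) * (μ j * lam i))
          - ‖C j i‖ ^ 2 * (((ν : ℝ) ^ 2 / (1 - (ν : ℝ)) + ν) * e j)) = 0 := by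
        simp only [Finset.sum_sub_distrib]
        rw [heq, sub_self]
      have hnn : ∀ j i, (0:ℝ) ≤ ‖C j i‖ ^ 2 *
            ((ν : ℝ) ^ 2 / (1 - (ν : ℝ)) * lam i ^ (1 - 1 / (ν : ℝ)) + (ν : ℝ) * (μ j * lam i))
          - ‖C j i‖ ^ 2 * (((ν : ℝ) ^ 2 / (1 - (ν : ℝ)) + ν) * e j) := fun j i =>
        sub_nonneg.mpr (mul_le_mul_of_nonneg_left (hterm j i) (by positivity))
      have houter := (Finset.sum_eq_zero_iff_of_nonneg
        (fun j _ => Finset.sum_nonneg fun i _ => hnn j i)).mp h0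
      have hterm0 : ∀ j i, ‖C j i‖ ^ 2 *
            ((ν : ℝ) ^ 2 / (1 - (ν : ℝ)) * lam i ^ (1 - 1 / (ν : ℝ)) + (ν : ℝ) * (μ j * lam i))
          - ‖C j i‖ ^ 2 * (((ν : ℝ) ^ 2 / (1 - (ν : ℝ)) + ν) * e j) = 0 := by
        intro j i
        have hin := houter j (Finset.mem_univ j)
        exact (Finset.sum_eq_zero_iff_of_nonneg (fun i _ => hnn j i)).mp hin i
          (Finset.mem_univ i)
      have hkey : ∀ j i, C j i = 0 ∨ lam i = d j := by
        intro j i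
        by_cases hc : C j i = 0
        · exact Or.inl hc
        · right
          have hqpos : (0:ℝ) < ‖C j i‖ ^ 2 := by
            have : ‖C j i‖ ≠ 0 := norm_ne_zero_iff.mpr hc
            positivity
          have h8 : (ν : ℝ) ^ 2 / (1 - (ν : ℝ)) * lam i ^ (1 - 1 / (ν : ℝ))
              + (ν : ℝ) * (μ j * lam i)
              = ((ν : ℝ) ^ 2 / (1 - (ν : ℝ)) + ν) * e j := by
            have h9 := hterm0 j i
            have h10 : ‖C j i‖ ^ 2 *
                (((ν : ℝ) ^ 2 / (1 - (ν : ℝ)) * lam i ^ (1 - 1 / (ν : ℝ))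
                  + (ν : ℝ) * (μ j * lam i))
                - (((ν : ℝ) ^ 2 / (1 - (ν : ℝ)) + ν) * e j)) = 0 := by
              rw [mul_sub]; linarith [h9]
            rcases mul_eq_zero.mp h10 with h11 | h11
            · exact absurd h11 hqpos.ne'
            · linarith [sub_eq_zero.mp h11]
          have h12 := scalarKey_eq ν hν (hlam i) (hμ j) (by simpa [he_def] using h8)
          simpa [hd_def] using h12
      have hCD : C * diagonal (fun i => (lam i : ℂ))
          = diagonal (fun j => (d j : ℂ)) * C := by
        ext j i
        rw [Matrix.mul_diagonal, Matrix.diagonal_mul]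
        rcases hkey j i with h | h
        · rw [h, zero_mul, mul_zero]
        · rw [h]; ring
      have hVC : V * C = U := by
        rw [hC_def, ← Matrix.mul_assoc, hV2, Matrix.one_mul]
      have hAA₀ : A = A₀ := by
        calc A = U * diagonal (fun i => (lam i : ℂ)) * Uᴴ := hAspec
        _ = (V * C) * diagonal (fun i => (lam i : ℂ)) * (V * C)ᴴ := by rw [hVC]
        _ = V * (C * diagonal (fun i => (lam i : ℂ)) * Cᴴ) * Vᴴ := by
              rw [conjTranspose_mul]; simp only [Matrix.mul_assoc]
        _ = V * (diagonal (fun j => (d j : ℂ)) * (C * Cᴴ)) * Vᴴ := by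
              rw [hCD]; simp only [Matrix.mul_assoc]
        _ = A₀ := by
              rw [hCC2, Matrix.mul_one, hA₀_def, Matrix.mul_assoc]
      rw [hBA, hAA₀]
  refine ⟨hBoPD, fun B hB => ?_, fun B hB heq => ?_⟩
  · rw [hpointBo]
    exact (main B hB).1
  · have h13 := (main B hB).2 (by rw [heq, hpointBo])
    rw [h13, ← hBo]
end

section
/- Assume the feasibility assumption holds with density Φ₀, and set α := −ν·∫_{𝕋^d} trace(Ψ(e^{iθ})^{−1}·Φ₀(θ)) dμ(θ). Then for every dual variable Q ∈ ℒ₊ one has ⟨Q,Σ⟩ ≥ α, and consequently J_ν(Q) ≥ ⟨Q,Σ⟩ ≥ α; in particular J_ν is bounded from below on ℒ₊. -/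
open Matrix MeasureTheory ComplexOrder ENNReal
noncomputable section

/-- The fundamental domain `(−π, π]^d` of the `d`-torus `𝕋^d`. -/
def torusSet (d : ℕ) : Set (Fin d → ℝ) :=
  Set.univ.pi fun _ => Set.Ioc (-Real.pi) Real.pi

/-- The normalized Lebesgue measure `dμ(θ) = (2π)^{−d} dθ₁⋯dθ_d` on `𝕋^d = (−π, π]^d`. -/
def torusMeasure (d : ℕ) : Measure (Fin d → ℝ) :=
  (ENNReal.ofReal ((2 * Real.pi) ^ d))⁻¹ • volume.restrict (torusSet d)

/-- `e^{i⟨k,θ⟩}` where `⟨k,θ⟩ = Σ_j k_j θ_j`. -/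
def eik {d : ℕ} (k : Fin d → ℤ) (θ : Fin d → ℝ) : ℂ :=
  Complex.exp (Complex.I * ∑ j, (k j : ℂ) * (θ j : ℂ))

/-- The matrix trigonometric polynomial `Q(e^{iθ}) = Σ_{k∈Λ} Q_k e^{−i⟨k,θ⟩}`. -/
def trigPoly {d m : ℕ} (Λ : Finset (Fin d → ℤ))
    (Q : (Fin d → ℤ) → Matrix (Fin m) (Fin m) ℂ) (θ : Fin d → ℝ) :
    Matrix (Fin m) (Fin m) ℂ :=
  ∑ k ∈ Λ, eik (-k) θ • Q k

/-- A dual variable: a family `{Q_k}` with the Hermitian symmetry `Q_{−k} = Q_k^*`. -/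
def IsDualVar {d m : ℕ} (Q : (Fin d → ℤ) → Matrix (Fin m) (Fin m) ℂ) : Prop :=
  ∀ k, Q (-k) = (Q k)ᴴ

/-- The index set `Λ` is finite (a `Finset`), contains `0`, and is symmetric. -/
def IsIndexSet {d : ℕ} (Λ : Finset (Fin d → ℤ)) : Prop :=
  (0 : Fin d → ℤ) ∈ Λ ∧ ∀ k ∈ Λ, -k ∈ Λ

/-- Bounded and coercive prior: `a·I ≤ Ψ(e^{iθ}) ≤ b·I` for all `θ`, with `0 < a < b`. -/
def BoundedCoercive {d m : ℕ} (Ψ : (Fin d → ℝ) → Matrix (Fin m) (Fin m) ℂ) : Prop :=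
  ∃ a b : ℝ, 0 < a ∧ a < b ∧
    ∀ θ, (Ψ θ - (a : ℂ) • 1).PosSemidef ∧ ((b : ℂ) • 1 - Ψ θ).PosSemidef

/-- `z(θ) = (e^{iθ₁}, …, e^{iθ_d})`. -/
def zvec {d : ℕ} (θ : Fin d → ℝ) : Fin d → ℂ := fun j => Complex.exp (Complex.I * θ j)

/-- Each entry of `Ψ` is a rational function of `(e^{iθ₁}, …, e^{iθ_d})`: `Ψ = N_Ψ/d_Ψ`
with `N_Ψ` a matrix of polynomials and `d_Ψ` a scalar polynomial non-vanishing on the torus. -/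
def RationalPrior {d m : ℕ} (Ψ : (Fin d → ℝ) → Matrix (Fin m) (Fin m) ℂ) : Prop :=
  ∃ (N : Matrix (Fin m) (Fin m) (MvPolynomial (Fin d) ℂ)) (dP : MvPolynomial (Fin d) ℂ),
    ∀ θ : Fin d → ℝ, MvPolynomial.eval (zvec θ) dP ≠ 0 ∧
      Ψ θ = (MvPolynomial.eval (zvec θ) dP)⁻¹ • N.map (MvPolynomial.eval (zvec θ))

/-- The feasible set `ℒ₊`: dual variables `Q` with `νΨ(e^{iθ})⁻¹ + Q(e^{iθ})` positive
semidefinite for every `θ` and not identically zero. -/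
def memFeasible {d m : ℕ} (ν : ℕ) (Λ : Finset (Fin d → ℤ))
    (Ψ : (Fin d → ℝ) → Matrix (Fin m) (Fin m) ℂ)
    (Q : (Fin d → ℤ) → Matrix (Fin m) (Fin m) ℂ) : Prop :=
  IsDualVar Q ∧
  (∀ θ, ((ν : ℂ) • (Ψ θ)⁻¹ + trigPoly Λ Q θ).PosSemidef) ∧
  ¬ ∀ θ, (ν : ℂ) • (Ψ θ)⁻¹ + trigPoly Λ Q θ = 0

/-- `⟨Q, Σ⟩ := Σ_{k∈Λ} trace(Q_k Σ_k^*)` (a real number for dual variables). -/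
def pairing {d m : ℕ} (Λ : Finset (Fin d → ℤ))
    (Q Sig : (Fin d → ℤ) → Matrix (Fin m) (Fin m) ℂ) : ℝ :=
  (∑ k ∈ Λ, Matrix.trace (Q k * (Sig k)ᴴ)).re

/-- The dual function
`J_ν(Q) = ⟨Q,Σ⟩ + (ν/(ν−1)) ∫ trace{[Ψ⁻¹ (Ψ⁻¹ + Q/ν)⁻¹]^{ν−1}} dμ`, with values in
`ℝ ∪ {+∞}` (the integral is a Lebesgue integral of the a.e.-defined nonnegative integrand). -/
def Jnu {d m : ℕ} (ν : ℕ) (Λ : Finset (Fin d → ℤ))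
    (Ψ : (Fin d → ℝ) → Matrix (Fin m) (Fin m) ℂ)
    (Sig Q : (Fin d → ℤ) → Matrix (Fin m) (Fin m) ℂ) : EReal :=
  ((pairing Λ Q Sig : ℝ) : EReal) +
    ((((ν : ℝ≥0∞) / ((ν : ℝ≥0∞) - 1)) *
      ∫⁻ θ, ENNReal.ofReal
        (Matrix.trace (((Ψ θ)⁻¹ * ((Ψ θ)⁻¹ + ((ν : ℂ))⁻¹ • trigPoly Λ Q θ)⁻¹) ^ (ν - 1))).re
        ∂(torusMeasure d) : ℝ≥0∞) : EReal)

/-- The feasibility assumption, density form: `Φ₀` is an integrable Hermitian-matrix-valued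
density, positive semidefinite a.e., positive definite on some nonempty open ball contained
in the torus, whose Fourier coefficients over `Λ` match the covariance data `Σ`. -/
def FeasibleData {d m : ℕ} (Λ : Finset (Fin d → ℤ))
    (Sig : (Fin d → ℤ) → Matrix (Fin m) (Fin m) ℂ)
    (Φ₀ : (Fin d → ℝ) → Matrix (Fin m) (Fin m) ℂ) : Prop :=
  (∀ i j, Integrable (fun θ => Φ₀ θ i j) (torusMeasure d)) ∧
  (∀ᵐ θ ∂(torusMeasure d), (Φ₀ θ).PosSemidef) ∧
  (∃ (θc : Fin d → ℝ) (ε : ℝ), 0 < ε ∧ Metric.ball θc ε ⊆ torusSet d ∧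
      ∀ θ ∈ Metric.ball θc ε, (Φ₀ θ).PosDef) ∧
  ∀ k ∈ Λ, ∀ i j, ∫ θ, eik k θ * Φ₀ θ i j ∂(torusMeasure d) = Sig k i j

/-- Covariance data: Hermitian symmetry `Σ_{−k} = Σ_k^*`. -/
def IsCovData {d m : ℕ} (Sig : (Fin d → ℤ) → Matrix (Fin m) (Fin m) ℂ) : Prop :=
  ∀ k, Sig (-k) = (Sig k)ᴴ

end

open Matrix MeasureTheory ComplexOrder ENNReal
noncomputable section


section AuxLemmas
open Matrix MeasureTheory ComplexOrder

lemma trace_mul_eq {m : ℕ} (M N : Matrix (Fin m) (Fin m) ℂ) :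
    Matrix.trace (M * N) = ∑ i, ∑ j, M i j * N j i := by
  simp [Matrix.trace, Matrix.diag, Matrix.mul_apply]

lemma psd_trace_re_nonneg {m : ℕ} {M : Matrix (Fin m) (Fin m) ℂ} (hM : M.PosSemidef) :
    0 ≤ (M.trace).re := by
  have h : ∀ i, 0 ≤ (M i i).re := by
    intro i
    have := hM.re_dotProduct_nonneg (Pi.single i 1)
    simpa [dotProduct, Pi.single_apply, mulVec, Finset.sum_ite_eq] using this
  simp only [Matrix.trace, Matrix.diag, Complex.re_sum]
  exact Finset.sum_nonneg fun i _ => h i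

open scoped MatrixOrder in
lemma psd_mul_trace_re_nonneg {m : ℕ} {A B : Matrix (Fin m) (Fin m) ℂ}
    (hA : A.PosSemidef) (hB : B.PosSemidef) : 0 ≤ (Matrix.trace (A * B)).re := by
  have h1 : A * B = A * CFC.sqrt B * CFC.sqrt B := by
    rw [Matrix.mul_assoc, CFC.sqrt_mul_sqrt_self B hB.nonneg]
  rw [h1, Matrix.trace_mul_cycle]
  have h2 : (CFC.sqrt B * A * CFC.sqrt B).PosSemidef := by
    have := hA.conjTranspose_mul_mul_same (CFC.sqrt B)
    rwa [(CFC.sqrt_nonneg B).posSemidef.isHermitian.eq] at this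
  exact psd_trace_re_nonneg h2

lemma smul_one_dot {m : ℕ} (a : ℂ) (x : Fin m → ℂ) :
    dotProduct (star x) ((a • (1 : Matrix (Fin m) (Fin m) ℂ)) *ᵥ x) = a * dotProduct (star x) x := by
  rw [Matrix.smul_mulVec, Matrix.one_mulVec, dotProduct_smul, smul_eq_mul]

lemma posDef_of_sub_smul_one {m : ℕ} {A : Matrix (Fin m) (Fin m) ℂ} {a : ℝ} (ha : 0 < a)
    (h : (A - (a : ℂ) • 1).PosSemidef) : A.PosDef := by
  have herm : A.IsHermitian := by
    have h1 := h.isHermitian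
    have h2 : ((a : ℂ) • (1 : Matrix (Fin m) (Fin m) ℂ)).IsHermitian := by
      unfold Matrix.IsHermitian
      rw [Matrix.conjTranspose_smul, Matrix.conjTranspose_one]
      simp [Complex.conj_ofReal]
    unfold Matrix.IsHermitian at h1 h2 ⊢
    rw [Matrix.conjTranspose_sub, h2] at h1
    have := congrArg (· + (a : ℂ) • (1 : Matrix (Fin m) (Fin m) ℂ)) h1
    simpa using this
  refine Matrix.PosDef.of_dotProduct_mulVec_pos herm fun x hx => ?_
  have h2 := h.dotProduct_mulVec_nonneg x
  rw [Matrix.sub_mulVec, dotProduct_sub, sub_nonneg, smul_one_dot] at h2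
  refine lt_of_lt_of_le ?_ h2
  have hpos : 0 < dotProduct (star x) x := Matrix.dotProduct_star_self_pos_iff.mpr hx
  rw [Complex.lt_def] at hpos ⊢
  constructor
  · simp only [Complex.mul_re, Complex.ofReal_re, Complex.ofReal_im, Complex.zero_re] at *
    nlinarith [hpos.1, hpos.2]
  · simp only [Complex.mul_im, Complex.ofReal_re, Complex.ofReal_im, Complex.zero_im] at *
    nlinarith [hpos.2]

lemma posSemidef_real_smul {m : ℕ} {M : Matrix (Fin m) (Fin m) ℂ} (hM : M.PosSemidef)
    {c : ℝ} (hc : 0 ≤ c) : ((c : ℂ) • M).PosSemidef := by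
  refine Matrix.PosSemidef.of_dotProduct_mulVec_nonneg ?_ ?_
  · unfold Matrix.IsHermitian
    rw [Matrix.conjTranspose_smul, hM.isHermitian.eq]
    simp [Complex.conj_ofReal]
  · intro x
    rw [Matrix.smul_mulVec, dotProduct_smul, smul_eq_mul]
    have h := hM.dotProduct_mulVec_nonneg x
    rw [Complex.le_def] at h ⊢
    constructor
    · simp only [Complex.mul_re, Complex.ofReal_re, Complex.ofReal_im, Complex.zero_re] at *
      nlinarith [h.1, h.2]
    · simp only [Complex.mul_im, Complex.ofReal_re, Complex.ofReal_im, Complex.zero_im] at *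
      nlinarith [h.2]

open scoped MatrixOrder in
lemma inv_sub_psd {m : ℕ} {A : Matrix (Fin m) (Fin m) ℂ} {a : ℝ} (ha : 0 < a)
    (h : (A - (a : ℂ) • 1).PosSemidef) :
    (((a⁻¹ : ℝ) : ℂ) • 1 - A⁻¹).PosSemidef := by
  have hA : A.PosDef := posDef_of_sub_smul_one ha h
  have hApsd := hA.posSemidef
  set S := CFC.sqrt A with hSdef
  have hS : S * S = A := CFC.sqrt_mul_sqrt_self A hApsd.nonneg
  have hdet : IsUnit A.det := A.isUnit_iff_isUnit_det.mp hA.isUnit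
  set M := ((a⁻¹ : ℝ) : ℂ) • (1 : Matrix (Fin m) (Fin m) ℂ) - A⁻¹ with hMdef
  have hca : ((a⁻¹ : ℝ) : ℂ) * (a : ℂ) = 1 := by
    rw [← Complex.ofReal_mul, inv_mul_cancel₀ ha.ne']; simp
  have key : A * M * A = ((a⁻¹ : ℝ) : ℂ) • (S * (A - (a : ℂ) • 1) * S) := by
    have hSA : S * A * S = A * A := by rw [← hS]; noncomm_ring
    have hL : A * M * A = ((a⁻¹ : ℝ) : ℂ) • (A * A) - A := by
      rw [hMdef, Matrix.mul_sub, Matrix.sub_mul]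
      rw [Matrix.mul_smul, Matrix.mul_one, Matrix.smul_mul]
      rw [Matrix.mul_assoc A A⁻¹ A, Matrix.nonsing_inv_mul A hdet, Matrix.mul_one]
    have hR : S * (A - (a : ℂ) • 1) * S = A * A - (a : ℂ) • A := by
      rw [Matrix.mul_sub, Matrix.sub_mul, hSA, Matrix.mul_smul, Matrix.mul_one,
        Matrix.smul_mul, hS]
    rw [hL, hR, smul_sub, smul_smul, hca, one_smul]
  have hP : (A * M * A).PosSemidef := by
    rw [key]
    refine posSemidef_real_smul ?_ (inv_nonneg.mpr ha.le)
    have := h.conjTranspose_mul_mul_same S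
    rwa [(CFC.sqrt_nonneg A).posSemidef.isHermitian.eq] at this
  have hcongr : M = (A⁻¹)ᴴ * (A * M * A) * A⁻¹ := by
    rw [hA.isHermitian.inv.eq]
    have h1 : A⁻¹ * (A * M * A) * A⁻¹ = (A⁻¹ * A) * M * (A * A⁻¹) := by noncomm_ring
    rw [h1, Matrix.nonsing_inv_mul A hdet, Matrix.mul_nonsing_inv A hdet, Matrix.one_mul,
      Matrix.mul_one]
  rw [hcongr]
  exact hP.conjTranspose_mul_mul_same A⁻¹

lemma norm_eik {d : ℕ} (k : Fin d → ℤ) (θ : Fin d → ℝ) : ‖eik k θ‖ = 1 := by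
  unfold eik
  rw [Complex.norm_exp]
  have : (∑ j, (k j : ℂ) * (θ j : ℂ)) = ((∑ j, (k j : ℝ) * θ j : ℝ) : ℂ) := by
    push_cast; ring_nf
  rw [this]
  simp [Complex.mul_re]

lemma continuous_eik {d : ℕ} (k : Fin d → ℤ) : Continuous fun θ : Fin d → ℝ => eik k θ := by
  unfold eik
  exact Complex.continuous_exp.comp <| continuous_const.mul <| continuous_finset_sum _
    fun j _ => continuous_const.mul (Complex.continuous_ofReal.comp (continuous_apply j))

lemma continuous_zvec {d : ℕ} : Continuous fun θ : Fin d → ℝ => zvec θ :=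
  continuous_pi fun j => Complex.continuous_exp.comp <|
    continuous_const.mul (Complex.continuous_ofReal.comp (continuous_apply j))

lemma continuous_psi {d m : ℕ} {Ψ : (Fin d → ℝ) → Matrix (Fin m) (Fin m) ℂ}
    (hΨrat : RationalPrior Ψ) : Continuous Ψ := by
  obtain ⟨N, dP, hrat⟩ := hΨrat
  have hdP : Continuous fun θ : Fin d → ℝ => MvPolynomial.eval (zvec θ) dP :=
    (MvPolynomial.continuous_eval dP).comp continuous_zvec
  have hdPne : ∀ θ, MvPolynomial.eval (zvec θ) dP ≠ 0 := fun θ => (hrat θ).1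
  have : Ψ = fun θ => (MvPolynomial.eval (zvec θ) dP)⁻¹ • N.map (MvPolynomial.eval (zvec θ)) :=
    funext fun θ => (hrat θ).2
  rw [this]
  refine Continuous.smul (hdP.inv₀ hdPne) ?_
  exact continuous_matrix fun i j => by
    exact (MvPolynomial.continuous_eval (N i j)).comp
      (continuous_zvec (d := d))

lemma continuous_psi_inv {d m : ℕ} {Ψ : (Fin d → ℝ) → Matrix (Fin m) (Fin m) ℂ}
    (hΨrat : RationalPrior Ψ) (hPD : ∀ θ, (Ψ θ).PosDef) :
    Continuous fun θ => (Ψ θ)⁻¹ := by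
  have hc := continuous_psi hΨrat
  have hdet : Continuous fun θ => (Ψ θ).det := hc.matrix_det
  have hdetne : ∀ θ, (Ψ θ).det ≠ 0 := fun θ => by
    have := (hPD θ).det_pos
    intro hz
    rw [hz] at this
    exact lt_irrefl 0 this
  have : (fun θ => (Ψ θ)⁻¹) = fun θ => ((Ψ θ).det)⁻¹ • (Ψ θ).adjugate := by
    funext θ
    rw [Matrix.inv_def, Ring.inverse_eq_inv]
  rw [this]
  exact (hdet.inv₀ hdetne).smul hc.matrix_adjugate

end AuxLemmas

/-- **Lower bound on `⟨Q,Σ⟩` and on the dual function over `ℒ₊`.**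
Under the feasibility assumption with density `Φ₀`, set
`α := −ν·∫ trace(Ψ⁻¹ Φ₀) dμ`. Then `⟨Q,Σ⟩ ≥ α` for every `Q ∈ ℒ₊`, and consequently
`J_ν(Q) ≥ ⟨Q,Σ⟩ ≥ α`; in particular `J_ν` is bounded from below on `ℒ₊`. -/
theorem Jnu_bounded_below
    {d m : ℕ} (hd : 1 ≤ d) (hm : 1 ≤ m) (ν : ℕ) (hν : 2 ≤ ν)
    (Λ : Finset (Fin d → ℤ)) (hΛ : IsIndexSet Λ)
    (Ψ : (Fin d → ℝ) → Matrix (Fin m) (Fin m) ℂ)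
    (hΨbc : BoundedCoercive Ψ) (hΨrat : RationalPrior Ψ)
    (Sig : (Fin d → ℤ) → Matrix (Fin m) (Fin m) ℂ) (hSig : IsCovData Sig)
    (Φ₀ : (Fin d → ℝ) → Matrix (Fin m) (Fin m) ℂ) (hfeas : FeasibleData Λ Sig Φ₀)
    (α : ℝ)
    (hα : α = -(ν : ℝ) * ∫ θ, (Matrix.trace ((Ψ θ)⁻¹ * Φ₀ θ)).re ∂(torusMeasure d)) :
    ∀ Q : (Fin d → ℤ) → Matrix (Fin m) (Fin m) ℂ, memFeasible ν Λ Ψ Q →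
      α ≤ pairing Λ Q Sig ∧
      ((pairing Λ Q Sig : ℝ) : EReal) ≤ Jnu ν Λ Ψ Sig Q ∧
      ((α : ℝ) : EReal) ≤ Jnu ν Λ Ψ Sig Q := by
  intro Q hQ
  obtain ⟨a, b, ha, hab, hbc⟩ := hΨbc
  obtain ⟨hΦint, hΦpsd, -, hΦfour⟩ := hfeas
  have hPD : ∀ θ, (Ψ θ).PosDef := fun θ => posDef_of_sub_smul_one ha (hbc θ).1
  have hΨinvc : Continuous fun θ => (Ψ θ)⁻¹ := continuous_psi_inv hΨrat hPD
  set μ := torusMeasure d with hμ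
  set g : (Fin d → ℝ) → ℝ := fun θ => (Matrix.trace ((Ψ θ)⁻¹ * Φ₀ θ)).re with hgdef
  -- measurability of g
  have hGasm : AEStronglyMeasurable (fun θ => Matrix.trace ((Ψ θ)⁻¹ * Φ₀ θ)) μ := by
    have : (fun θ => Matrix.trace ((Ψ θ)⁻¹ * Φ₀ θ))
        = fun θ => ∑ i, ∑ j, (Ψ θ)⁻¹ i j * Φ₀ θ j i := funext fun θ => trace_mul_eq _ _
    rw [this]
    refine Finset.aestronglyMeasurable_fun_sum _ fun i _ =>
      Finset.aestronglyMeasurable_fun_sum _ fun j _ => ?_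
    exact ((hΨinvc.matrix_elem i j).aestronglyMeasurable).mul (hΦint j i).1
  have hgasm : AEStronglyMeasurable g μ :=
    Complex.continuous_re.comp_aestronglyMeasurable hGasm
  -- bounds on g
  have hgle : ∀ᵐ θ ∂μ, 0 ≤ g θ ∧ g θ ≤ a⁻¹ * (Matrix.trace (Φ₀ θ)).re := by
    filter_upwards [hΦpsd] with θ hθ
    constructor
    · exact psd_mul_trace_re_nonneg (hPD θ).inv.posSemidef hθ
    · have h1 : 0 ≤ (Matrix.trace ((((a⁻¹ : ℝ) : ℂ) • 1 - (Ψ θ)⁻¹) * Φ₀ θ)).re :=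
        psd_mul_trace_re_nonneg (inv_sub_psd ha (hbc θ).1) hθ
      rw [Matrix.sub_mul, Matrix.smul_mul, Matrix.one_mul, Matrix.trace_sub,
        Matrix.trace_smul] at h1
      simp only [Complex.sub_re, smul_eq_mul, Complex.re_ofReal_mul] at h1
      simp only [hgdef]
      linarith
  have hΦtr_int : Integrable (fun θ => (Matrix.trace (Φ₀ θ)).re) μ := by
    have : (fun θ => (Matrix.trace (Φ₀ θ)).re) = fun θ => ∑ i, (Φ₀ θ i i).re :=
      funext fun θ => by simp [Matrix.trace, Matrix.diag, Complex.re_sum]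
    rw [this]
    exact integrable_finset_sum _ fun i _ => (hΦint i i).re
  have hgint : Integrable g μ := by
    refine Integrable.mono' (hΦtr_int.const_mul (a⁻¹)) hgasm ?_
    filter_upwards [hgle] with θ hθ
    rw [Real.norm_eq_abs, abs_of_nonneg hθ.1]
    exact hθ.2
  -- integrability of f-pieces
  have hterm : ∀ (k : Fin d → ℤ) (i j : Fin m),
      Integrable (fun θ => Q k i j * (eik (-k) θ * Φ₀ θ j i)) μ := fun k i j =>
    ((hΦint j i).bdd_mul (continuous_eik (-k)).aestronglyMeasurable
      (Filter.Eventually.of_forall fun θ => (norm_eik _ _).le)).const_mul _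
  have hFeq : ∀ θ, Matrix.trace (trigPoly Λ Q θ * Φ₀ θ)
      = ∑ k ∈ Λ, ∑ i, ∑ j, Q k i j * (eik (-k) θ * Φ₀ θ j i) := by
    intro θ
    unfold trigPoly
    rw [Finset.sum_mul, Matrix.trace_sum]
    refine Finset.sum_congr rfl fun k _ => ?_
    rw [Matrix.smul_mul, Matrix.trace_smul, smul_eq_mul, trace_mul_eq, Finset.mul_sum]
    refine Finset.sum_congr rfl fun i _ => ?_
    rw [Finset.mul_sum]
    exact Finset.sum_congr rfl fun j _ => by ring
  have hFint : Integrable (fun θ => Matrix.trace (trigPoly Λ Q θ * Φ₀ θ)) μ := by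
    have : (fun θ => Matrix.trace (trigPoly Λ Q θ * Φ₀ θ))
        = fun θ => ∑ k ∈ Λ, ∑ i, ∑ j, Q k i j * (eik (-k) θ * Φ₀ θ j i) := funext hFeq
    rw [this]
    exact integrable_finset_sum _ fun k _ => integrable_finset_sum _ fun i _ =>
      integrable_finset_sum _ fun j _ => hterm k i j
  -- pairing identity
  have hpair : pairing Λ Q Sig = ∫ θ, (Matrix.trace (trigPoly Λ Q θ * Φ₀ θ)).re ∂μ := by
    have hsum : ∑ k ∈ Λ, Matrix.trace (Q k * (Sig k)ᴴ)
        = ∫ θ, Matrix.trace (trigPoly Λ Q θ * Φ₀ θ) ∂μ := by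
      have step1 : ∑ k ∈ Λ, Matrix.trace (Q k * (Sig k)ᴴ)
          = ∑ k ∈ Λ, ∑ i, ∑ j, ∫ θ, Q k i j * (eik (-k) θ * Φ₀ θ j i) ∂μ := by
        refine Finset.sum_congr rfl fun k hk => ?_
        rw [← hSig k, trace_mul_eq]
        refine Finset.sum_congr rfl fun i _ => Finset.sum_congr rfl fun j _ => ?_
        rw [← hΦfour (-k) (hΛ.2 k hk) j i, ← integral_const_mul]
      rw [step1]
      have step2 : ∫ θ, Matrix.trace (trigPoly Λ Q θ * Φ₀ θ) ∂μ
          = ∫ θ, ∑ k ∈ Λ, ∑ i, ∑ j, Q k i j * (eik (-k) θ * Φ₀ θ j i) ∂μ :=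
        integral_congr_ae (Filter.Eventually.of_forall fun θ => hFeq θ)
      rw [step2]
      rw [integral_finset_sum _ (fun k _ => integrable_finset_sum _ fun i _ =>
        integrable_finset_sum _ fun j _ => hterm k i j)]
      refine Finset.sum_congr rfl fun k _ => ?_
      rw [integral_finset_sum _ (fun i _ => integrable_finset_sum _ fun j _ => hterm k i j)]
      refine Finset.sum_congr rfl fun i _ => ?_
      rw [integral_finset_sum _ (fun j _ => hterm k i j)]
    unfold pairing
    rw [hsum]
    have := integral_re (𝕜 := ℂ) hFint
    simpa using this.symm
  -- key a.e. inequality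
  have hkey : ∀ᵐ θ ∂μ, (0:ℝ) ≤ (ν : ℝ) * g θ + (Matrix.trace (trigPoly Λ Q θ * Φ₀ θ)).re := by
    filter_upwards [hΦpsd] with θ hθ
    have h0 := psd_mul_trace_re_nonneg (hQ.2.1 θ) hθ
    rw [Matrix.add_mul, Matrix.smul_mul, Matrix.trace_add, Matrix.trace_smul, smul_eq_mul] at h0
    simp only [Complex.add_re, Complex.mul_re, Complex.natCast_re, Complex.natCast_im,
      zero_mul, sub_zero] at h0
    simpa [hgdef] using h0
  have hInt0 : (0:ℝ) ≤ ∫ θ, ((ν : ℝ) * g θ + (Matrix.trace (trigPoly Λ Q θ * Φ₀ θ)).re) ∂μ :=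
    integral_nonneg_of_ae hkey
  have hfint : Integrable (fun θ => (Matrix.trace (trigPoly Λ Q θ * Φ₀ θ)).re) μ := by
    simpa using hFint.re
  rw [integral_add (hgint.const_mul ((ν : ℝ))) hfint, integral_const_mul] at hInt0
  have hαle : α ≤ pairing Λ Q Sig := by
    rw [hα, hpair]
    have : ∫ θ, (Matrix.trace ((Ψ θ)⁻¹ * Φ₀ θ)).re ∂(torusMeasure d) = ∫ θ, g θ ∂μ := rfl
    rw [this]
    linarith
  refine ⟨hαle, ?_, ?_⟩
  · unfold Jnu
    exact le_add_of_nonneg_right (EReal.coe_ennreal_nonneg _)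
  · calc ((α : ℝ) : EReal) ≤ ((pairing Λ Q Sig : ℝ) : EReal) := by exact_mod_cast hαle
      _ ≤ Jnu ν Λ Ψ Sig Q := by
        unfold Jnu
        exact le_add_of_nonneg_right (EReal.coe_ennreal_nonneg _)


end
end

section
/- The dual function J_ν, viewed as an extended-real-valued function of the coefficient family {Q_k}_{k∈Λ}, is lower semicontinuous on ℒ₊: for every Q̄ ∈ ℒ₊ and every sequence {Q_j}_{j≥1} ⊂ ℒ₊ whose coefficient families converge to those of Q̄, one has J_ν(Q̄) ≤ liminf_{j→∞} J_ν(Q_j). -/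
open Matrix MeasureTheory ComplexOrder ENNReal
open Matrix MeasureTheory ComplexOrder ENNReal Filter
noncomputable section

section Aux
open Matrix MeasureTheory ComplexOrder ENNReal Filter

instance auxMatrixMeasurableSpace {n m : ℕ} : MeasurableSpace (Matrix (Fin n) (Fin m) ℂ) :=
  inferInstanceAs (MeasurableSpace (Fin n → Fin m → ℂ))

instance auxMatrixSecondCountable {n m : ℕ} :
    SecondCountableTopology (Matrix (Fin n) (Fin m) ℂ) :=
  inferInstanceAs (SecondCountableTopology (Fin n → Fin m → ℂ))

instance auxMatrixBorelSpace {n m : ℕ} : BorelSpace (Matrix (Fin n) (Fin m) ℂ) :=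
  inferInstanceAs (BorelSpace (Fin n → Fin m → ℂ))

lemma aux_entry_meas {X : Type*} [MeasurableSpace X] {m : ℕ}
    {A : X → Matrix (Fin m) (Fin m) ℂ} (hA : Measurable A) (i j : Fin m) :
    Measurable fun x => A x i j :=
  (measurable_pi_apply j).comp ((measurable_pi_apply i).comp hA)

lemma aux_meas_of_entries {X : Type*} [MeasurableSpace X] {m : ℕ}
    {A : X → Matrix (Fin m) (Fin m) ℂ} (h : ∀ i j, Measurable fun x => A x i j) :
    Measurable A :=
  measurable_pi_iff.2 fun i => measurable_pi_iff.2 fun j => h i j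

lemma aux_measurable_matrix_inv {X : Type*} [MeasurableSpace X] {m : ℕ}
    {A : X → Matrix (Fin m) (Fin m) ℂ} (hA : Measurable A) :
    Measurable fun x => (A x)⁻¹ := by
  have hdet : Measurable fun x => (A x).det :=
    (continuous_id.matrix_det).measurable.comp hA
  have hadj : Measurable fun x => (A x).adjugate :=
    (continuous_id.matrix_adjugate).measurable.comp hA
  have heq : (fun x => (A x)⁻¹) = fun x => ((A x).det)⁻¹ • (A x).adjugate := by
    funext x; rw [Matrix.inv_def, Ring.inverse_eq_inv]
  rw [heq]
  refine aux_meas_of_entries fun i j => ?_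
  simp only [Matrix.smul_apply, smul_eq_mul]
  exact hdet.inv.mul (aux_entry_meas hadj i j)

lemma aux_continuous_eik {d : ℕ} (k : Fin d → ℤ) : Continuous (eik k) := by
  unfold eik
  exact Complex.continuous_exp.comp <| continuous_const.mul <|
    continuous_finset_sum _ fun j _ =>
      continuous_const.mul (Complex.continuous_ofReal.comp (continuous_apply j))

lemma aux_continuous_trigPoly {d m : ℕ} (Λ : Finset (Fin d → ℤ))
    (Q : (Fin d → ℤ) → Matrix (Fin m) (Fin m) ℂ) :
    Continuous fun θ => trigPoly Λ Q θ := by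
  unfold trigPoly
  refine continuous_matrix fun i j => ?_
  simp only [Matrix.sum_apply, Matrix.smul_apply, smul_eq_mul]
  exact continuous_finset_sum _ fun k _ =>
    (aux_continuous_eik (-k)).mul continuous_const

lemma aux_meas_mul {X : Type*} [MeasurableSpace X] {m : ℕ}
    {A B : X → Matrix (Fin m) (Fin m) ℂ} (hA : Measurable A) (hB : Measurable B) :
    Measurable fun x => A x * B x := by
  refine aux_meas_of_entries fun i j => ?_
  simp only [Matrix.mul_apply]
  exact Finset.measurable_sum _ fun k _ => (aux_entry_meas hA i k).mul (aux_entry_meas hB k j)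

lemma aux_meas_pow {X : Type*} [MeasurableSpace X] {m : ℕ}
    {A : X → Matrix (Fin m) (Fin m) ℂ} (hA : Measurable A) :
    ∀ n : ℕ, Measurable fun x => (A x) ^ n
  | 0 => by simpa [pow_zero] using (measurable_const : Measurable fun _ : X => (1 : Matrix (Fin m) (Fin m) ℂ))
  | (n + 1) => by
      simp only [pow_succ]
      exact aux_meas_mul (aux_meas_pow hA n) hA

lemma aux_meas_trace {X : Type*} [MeasurableSpace X] {m : ℕ}
    {A : X → Matrix (Fin m) (Fin m) ℂ} (hA : Measurable A) :
    Measurable fun x => (A x).trace := by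
  simp only [Matrix.trace, Matrix.diag]
  exact Finset.measurable_sum _ fun i _ => aux_entry_meas hA i i

end Aux

set_option maxHeartbeats 1000000 in
/-- **Lower semicontinuity of the dual function `J_ν` on `ℒ₊`** (sequential form):
for every `Q̄ ∈ ℒ₊` and every sequence `{Q_j} ⊂ ℒ₊` whose coefficient families (indexed
by `Λ`) converge to those of `Q̄`, one has `J_ν(Q̄) ≤ liminf_j J_ν(Q_j)`. -/
theorem Jnu_lowerSemicontinuous
    {d m : ℕ} (hd : 1 ≤ d) (hm : 1 ≤ m) (ν : ℕ) (hν : 2 ≤ ν)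
    (Λ : Finset (Fin d → ℤ)) (hΛ : IsIndexSet Λ)
    (Ψ : (Fin d → ℝ) → Matrix (Fin m) (Fin m) ℂ)
    (hΨbc : BoundedCoercive Ψ) (hΨrat : RationalPrior Ψ)
    (Sig : (Fin d → ℤ) → Matrix (Fin m) (Fin m) ℂ) (hSig : IsCovData Sig)
    (Qbar : (Fin d → ℤ) → Matrix (Fin m) (Fin m) ℂ) (hQbar : memFeasible ν Λ Ψ Qbar)
    (Qs : ℕ → (Fin d → ℤ) → Matrix (Fin m) (Fin m) ℂ)
    (hQs : ∀ j, memFeasible ν Λ Ψ (Qs j))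
    (hconv : ∀ k ∈ Λ, ∀ a b : Fin m,
      Tendsto (fun j => Qs j k a b) atTop (nhds (Qbar k a b))) :
    Jnu ν Λ Ψ Sig Qbar ≤ liminf (fun j => Jnu ν Λ Ψ Sig (Qs j)) atTop := by
  classical
  obtain ⟨N, dP, hrat⟩ := hΨrat
  have hz : Continuous (zvec (d := d)) := continuous_pi fun j =>
    Complex.continuous_exp.comp (continuous_const.mul
      (Complex.continuous_ofReal.comp (continuous_apply j)))
  have hden : Continuous fun θ : Fin d → ℝ => MvPolynomial.eval (zvec θ) dP :=
    (MvPolynomial.continuous_eval (p := dP)).comp hz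
  have hΨeq : Ψ = fun θ =>
      (MvPolynomial.eval (zvec θ) dP)⁻¹ • N.map (MvPolynomial.eval (zvec θ)) :=
    funext fun θ => (hrat θ).2
  have hΨcont : Continuous Ψ := by
    rw [hΨeq]
    refine continuous_matrix fun i j => ?_
    simp only [Matrix.smul_apply, Matrix.map_apply, smul_eq_mul]
    exact (hden.inv₀ fun θ => (hrat θ).1).mul
      ((MvPolynomial.continuous_eval (p := N i j)).comp hz)
  set μ := torusMeasure d with hμdef
  set c : ℝ≥0∞ := (ν : ℝ≥0∞) / ((ν : ℝ≥0∞) - 1) with hcdef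
  set F : ((Fin d → ℤ) → Matrix (Fin m) (Fin m) ℂ) → (Fin d → ℝ) → ℝ≥0∞ := fun Q θ =>
    ENNReal.ofReal (Matrix.trace (((Ψ θ)⁻¹ *
      ((Ψ θ)⁻¹ + ((ν : ℂ))⁻¹ • trigPoly Λ Q θ)⁻¹) ^ (ν - 1))).re with hFdef
  have hΨinv : Measurable fun θ => (Ψ θ)⁻¹ := aux_measurable_matrix_inv hΨcont.measurable
  have hBmeas : ∀ Q : (Fin d → ℤ) → Matrix (Fin m) (Fin m) ℂ,
      Measurable fun θ => (Ψ θ)⁻¹ + ((ν : ℂ))⁻¹ • trigPoly Λ Q θ := by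
    intro Q
    refine aux_meas_of_entries fun i j => ?_
    simp only [Matrix.add_apply, Matrix.smul_apply, smul_eq_mul]
    exact (aux_entry_meas hΨinv i j).add
      (measurable_const.mul (aux_entry_meas (aux_continuous_trigPoly Λ Q).measurable i j))
  have hFmeas : ∀ Q, Measurable (F Q) := by
    intro Q
    rw [hFdef]
    exact ENNReal.measurable_ofReal.comp (Complex.measurable_re.comp
      (aux_meas_trace (aux_meas_pow (aux_meas_mul hΨinv
        (aux_measurable_matrix_inv (hBmeas Q))) (ν - 1))))
  have hptw : ∀ θ, F Qbar θ ≤ liminf (fun j => F (Qs j) θ) atTop := by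
    intro θ
    by_cases hA : IsUnit ((Ψ θ)⁻¹ + ((ν : ℂ))⁻¹ • trigPoly Λ Qbar θ).det
    · have htp : Tendsto (fun j => trigPoly Λ (Qs j) θ) atTop (nhds (trigPoly Λ Qbar θ)) := by
        refine tendsto_pi_nhds.2 fun i => tendsto_pi_nhds.2 fun j' => ?_
        simp only [trigPoly, Matrix.sum_apply, Matrix.smul_apply, smul_eq_mul]
        exact tendsto_finset_sum _ fun k hk => ((hconv k hk i j').const_mul _)
      have hB : Tendsto (fun j => (Ψ θ)⁻¹ + ((ν : ℂ))⁻¹ • trigPoly Λ (Qs j) θ) atTop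
          (nhds ((Ψ θ)⁻¹ + ((ν : ℂ))⁻¹ • trigPoly Λ Qbar θ)) :=
        tendsto_const_nhds.add (htp.const_smul _)
      have hAinv : ContinuousAt Inv.inv ((Ψ θ)⁻¹ + ((ν : ℂ))⁻¹ • trigPoly Λ Qbar θ) := by
        apply continuousAt_matrix_inv
        rw [Ring.inverse_eq_inv']
        exact continuousAt_inv₀ hA.ne_zero
      have h2 : Tendsto (fun j => ((Ψ θ)⁻¹ + ((ν : ℂ))⁻¹ • trigPoly Λ (Qs j) θ)⁻¹) atTop
          (nhds ((Ψ θ)⁻¹ + ((ν : ℂ))⁻¹ • trigPoly Λ Qbar θ)⁻¹) := hAinv.tendsto.comp hB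
      have h3 : Continuous fun C : Matrix (Fin m) (Fin m) ℂ =>
          ENNReal.ofReal (Matrix.trace (((Ψ θ)⁻¹ * C) ^ (ν - 1))).re :=
        ENNReal.continuous_ofReal.comp (Complex.continuous_re.comp
          (((continuous_const.matrix_mul continuous_id).pow (ν - 1)).matrix_trace))
      have hFt : Tendsto (fun j => F (Qs j) θ) atTop (nhds (F Qbar θ)) := by
        rw [hFdef]
        exact (h3.tendsto _).comp h2
      exact hFt.liminf_eq.ge
    · have h0 : ((Ψ θ)⁻¹ + ((ν : ℂ))⁻¹ • trigPoly Λ Qbar θ)⁻¹ = 0 :=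
        Matrix.nonsing_inv_apply_not_isUnit _ hA
      have hF0 : F Qbar θ = 0 := by
        rw [hFdef]
        simp only [h0, mul_zero]
        rw [zero_pow (by omega : ν - 1 ≠ 0)]
        simp
      rw [hF0]
      exact zero_le
  have hIle : ∫⁻ θ, F Qbar θ ∂μ ≤ liminf (fun j => ∫⁻ θ, F (Qs j) θ ∂μ) atTop :=
    calc ∫⁻ θ, F Qbar θ ∂μ ≤ ∫⁻ θ, liminf (fun j => F (Qs j) θ) atTop ∂μ :=
          lintegral_mono hptw
      _ ≤ liminf (fun j => ∫⁻ θ, F (Qs j) θ ∂μ) atTop :=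
          lintegral_liminf_le fun j => hFmeas (Qs j)
  have hc_ne_top : c ≠ ∞ := by
    refine (ENNReal.div_lt_top (by simp) ?_).ne
    simp only [ne_eq, tsub_eq_zero_iff_le, not_le]
    have h2 : (2 : ℝ≥0∞) ≤ (ν : ℝ≥0∞) := by exact_mod_cast hν
    exact lt_of_lt_of_le ENNReal.one_lt_two h2
  have hmulliminf : c * liminf (fun j => ∫⁻ θ, F (Qs j) θ ∂μ) atTop
      = liminf (fun j => c * ∫⁻ θ, F (Qs j) θ ∂μ) atTop := by
    have := Monotone.map_liminf_of_continuousAt (F := atTop)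
      (f := fun x : ℝ≥0∞ => c * x) (fun a b h => mul_le_mul_right h c)
      (fun j => ∫⁻ θ, F (Qs j) θ ∂μ) ((ENNReal.continuous_const_mul hc_ne_top).continuousAt)
    simpa only [Function.comp_def] using this
  have hpair : Tendsto (fun j => pairing Λ (Qs j) Sig) atTop (nhds (pairing Λ Qbar Sig)) := by
    unfold pairing
    refine (Complex.continuous_re.tendsto _).comp ?_
    refine tendsto_finset_sum _ fun k hk => ?_
    simp only [Matrix.trace, Matrix.diag_apply, Matrix.mul_apply]
    refine tendsto_finset_sum _ fun a _ => tendsto_finset_sum _ fun b _ => ?_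
    exact (hconv k hk a b).mul_const _
  have hIbar : (((c * ∫⁻ θ, F Qbar θ ∂μ) : ℝ≥0∞) : EReal)
      ≤ liminf (fun j => (((c * ∫⁻ θ, F (Qs j) θ ∂μ) : ℝ≥0∞) : EReal)) atTop :=
    calc (((c * ∫⁻ θ, F Qbar θ ∂μ) : ℝ≥0∞) : EReal)
        ≤ ((liminf (fun j => c * ∫⁻ θ, F (Qs j) θ ∂μ) atTop : ℝ≥0∞) : EReal) := by
          rw [EReal.coe_ennreal_le_coe_ennreal_iff, ← hmulliminf]
          exact mul_le_mul_right hIle c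
      _ = liminf (fun j => (((c * ∫⁻ θ, F (Qs j) θ ∂μ) : ℝ≥0∞) : EReal)) atTop := by
          have := Monotone.map_liminf_of_continuousAt (F := atTop)
            (f := ((↑) : ℝ≥0∞ → EReal)) EReal.coe_ennreal_strictMono.monotone
            (fun j => c * ∫⁻ θ, F (Qs j) θ ∂μ) continuous_coe_ennreal_ereal.continuousAt
          simpa only [Function.comp_def] using this
  have hp : liminf (fun j => ((pairing Λ (Qs j) Sig : ℝ) : EReal)) atTop
      = ((pairing Λ Qbar Sig : ℝ) : EReal) := (EReal.tendsto_coe.2 hpair).liminf_eq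
  calc Jnu ν Λ Ψ Sig Qbar
      = ((pairing Λ Qbar Sig : ℝ) : EReal) + (((c * ∫⁻ θ, F Qbar θ ∂μ) : ℝ≥0∞) : EReal) := rfl
    _ ≤ liminf (fun j => ((pairing Λ (Qs j) Sig : ℝ) : EReal)) atTop
        + liminf (fun j => (((c * ∫⁻ θ, F (Qs j) θ ∂μ) : ℝ≥0∞) : EReal)) atTop := by
          rw [hp]
          exact add_le_add le_rfl hIbar
    _ ≤ liminf (fun j => ((pairing Λ (Qs j) Sig : ℝ) : EReal)
          + (((c * ∫⁻ θ, F (Qs j) θ ∂μ) : ℝ≥0∞) : EReal)) atTop := EReal.le_liminf_add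
    _ = liminf (fun j => Jnu ν Λ Ψ Sig (Qs j)) atTop := rfl

end
end

section
/- Let Q° ∈ ℒ₊, let K(Q°) := { Σ_K = {Σ_{K,k}}_{k∈Λ} with Σ_{K,−k} = Σ_{K,k}^* : ⟨Σ_K, Q − Q°⟩ ≤ 0 for all Q ∈ ℒ₊ } be the normal cone to ℒ₊ at Q°, and let 𝔠₊ := { Σ' : ⟨Σ', Q⟩ > 0 for every dual variable Q ≠ 0 such that Q(e^{iθ}) is positive semidefinite for all θ ∈ 𝕋^d }. If Σ_K ∈ K(Q°), then −Σ_K belongs to the closure of 𝔠₊. -/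
open Matrix MeasureTheory ComplexOrder ENNReal
open Matrix MeasureTheory ComplexOrder ENNReal
noncomputable section

/-- The norm `‖Q‖ = (Σ_{k∈Λ} trace(Q_k Q_k^*))^{1/2}` on coefficient families. -/
def dualNorm {d m : ℕ} (Λ : Finset (Fin d → ℤ))
    (Q : (Fin d → ℤ) → Matrix (Fin m) (Fin m) ℂ) : ℝ :=
  Real.sqrt ((∑ k ∈ Λ, Matrix.trace (Q k * (Q k)ᴴ)).re)

/-- Membership in the dual cone `𝔠₊` of the nonnegative matrix trigonometric polynomials:
`⟨Σ', Q⟩ > 0` for every nonzero dual variable `Q` with `Q(e^{iθ}) ⪰ 0` on the torus. -/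
def memDualCone {d m : ℕ} (Λ : Finset (Fin d → ℤ))
    (Sig' : (Fin d → ℤ) → Matrix (Fin m) (Fin m) ℂ) : Prop :=
  IsCovData Sig' ∧
  ∀ Q : (Fin d → ℤ) → Matrix (Fin m) (Fin m) ℂ, IsDualVar Q →
    (∀ θ, (trigPoly Λ Q θ).PosSemidef) → (∃ k ∈ Λ, Q k ≠ 0) →
    0 < pairing Λ Q Sig'

section Helpers

lemma aux_psd_trace {m : ℕ} {A : Matrix (Fin m) (Fin m) ℂ} (h : A.PosSemidef) :
    0 ≤ (A.trace).re ∧ (A.trace.re = 0 → A = 0) := by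
  obtain ⟨B, rfl⟩ : ∃ B : Matrix (Fin m) (Fin m) ℂ, A = Bᴴ * B := by
    open scoped MatrixOrder in
    obtain ⟨B, hB⟩ := CStarAlgebra.nonneg_iff_eq_star_mul_self.mp h.nonneg
    exact ⟨B, hB⟩
  have htr : ((Bᴴ * B).trace).re = ∑ i, ∑ j, Complex.normSq (B j i) := by
    simp only [Matrix.trace, Matrix.diag, Matrix.mul_apply, Matrix.conjTranspose_apply]
    rw [Complex.re_sum]
    congr 1; funext i
    rw [Complex.re_sum]
    congr 1; funext j
    simp [Complex.star_def, ← Complex.normSq_eq_conj_mul_self]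
  constructor
  · rw [htr]
    exact Finset.sum_nonneg fun i _ => Finset.sum_nonneg fun j _ => Complex.normSq_nonneg _
  · intro h0
    rw [htr] at h0
    have hB : B = 0 := by
      ext j i
      have h1 : ∀ i ∈ Finset.univ, (0:ℝ) ≤ ∑ j, Complex.normSq (B j i) := by
        intro i _; exact Finset.sum_nonneg fun j _ => Complex.normSq_nonneg _
      have h2 := (Finset.sum_eq_zero_iff_of_nonneg h1).mp h0 i (Finset.mem_univ i)
      have h3 : ∀ j ∈ Finset.univ, (0:ℝ) ≤ Complex.normSq (B j i) := by
        intro j _; exact Complex.normSq_nonneg _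
      have := (Finset.sum_eq_zero_iff_of_nonneg h3).mp h2 j (Finset.mem_univ j)
      simpa using Complex.normSq_eq_zero.mp this
    rw [hB]; simp

lemma aux_trace_re_pos {m : ℕ} {A : Matrix (Fin m) (Fin m) ℂ} (h : A.PosSemidef) (hA : A ≠ 0) :
    0 < (A.trace).re := by
  obtain ⟨h1, h2⟩ := aux_psd_trace h
  rcases h1.lt_or_eq with h' | h'
  · exact h'
  · exact absurd (h2 h'.symm) hA

lemma aux_psd_add_eq_zero {m : ℕ} {A B : Matrix (Fin m) (Fin m) ℂ}
    (hA : A.PosSemidef) (hB : B.PosSemidef) (hAB : A + B = 0) : A = 0 := by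
  by_contra h
  have h1 := aux_trace_re_pos hA h
  have h2 := (aux_psd_trace hB).1
  have h3 : ((A + B).trace).re = 0 := by rw [hAB]; simp
  rw [Matrix.trace_add, Complex.add_re] at h3
  linarith

lemma aux_sum_exp_root (N : ℕ) (a : ℤ) (ha : a ≠ 0) (haN : a.natAbs < N) :
    ∑ t : Fin N, Complex.exp (Complex.I * a * (2 * Real.pi * t / N)) = 0 := by
  have hN : 0 < N := lt_of_le_of_lt (Nat.zero_le _) haN
  have hNC : (N : ℂ) ≠ 0 := Nat.cast_ne_zero.mpr hN.ne'
  have hπ : (Real.pi : ℂ) ≠ 0 := Complex.ofReal_ne_zero.mpr Real.pi_ne_zero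
  have h2πI : (2 * (Real.pi:ℂ) * Complex.I) ≠ 0 := by
    simp [hπ, Complex.I_ne_zero]
  set x : ℂ := Complex.exp (Complex.I * a * (2 * Real.pi / N)) with hxdef
  have hx : ∀ t : Fin N, Complex.exp (Complex.I * a * (2 * Real.pi * t / N)) = x ^ (t : ℕ) := by
    intro t
    rw [hxdef, ← Complex.exp_nat_mul]
    congr 1
    field_simp
  have hx1 : x ≠ 1 := by
    intro h
    obtain ⟨n, hn⟩ := Complex.exp_eq_one_iff.mp h
    have key : ((a:ℤ):ℂ) * (2*(Real.pi:ℂ)*Complex.I)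
        = ((n*N : ℤ):ℂ) * (2*(Real.pi:ℂ)*Complex.I) := by
      field_simp at hn
      push_cast
      linear_combination (2*(Real.pi:ℂ)*Complex.I) * hn
    have han : a = n * N := by
      exact_mod_cast mul_right_cancel₀ h2πI key
    have hn0 : n ≠ 0 := by rintro rfl; simp at han; exact ha han
    have hn1 : 1 ≤ n.natAbs := Nat.one_le_iff_ne_zero.mpr (Int.natAbs_ne_zero.mpr hn0)
    have : N ≤ a.natAbs := by
      rw [han, Int.natAbs_mul, Int.natAbs_natCast]
      nlinarith
    omega
  have hxN : x ^ N = 1 := by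
    rw [hxdef, ← Complex.exp_nat_mul]
    have : (N:ℂ) * (Complex.I * a * (2 * Real.pi / N)) = a * (2 * Real.pi * Complex.I) := by
      field_simp
    rw [this]
    exact_mod_cast Complex.exp_int_mul_two_pi_mul_I a
  rw [Finset.sum_congr rfl (fun t _ => hx t)]
  rw [Fin.sum_univ_eq_sum_range (fun i => x ^ i)]
  rw [geom_sum_eq hx1]
  rw [hxN]
  simp

lemma aux_eik_mul {d : ℕ} (a b : Fin d → ℤ) (θ : Fin d → ℝ) :
    eik a θ * eik b θ = eik (a + b) θ := by
  rw [eik, eik, eik, ← Complex.exp_add]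
  congr 1
  rw [← mul_add, ← Finset.sum_add_distrib]
  congr 1
  exact Finset.sum_congr rfl fun j _ => by simp only [Pi.add_apply]; push_cast; ring

lemma aux_eik_zero {d : ℕ} (θ : Fin d → ℝ) : eik (0 : Fin d → ℤ) θ = 1 := by
  simp [eik]

lemma aux_eik_as_prod {d : ℕ} (a : Fin d → ℤ) (θ : Fin d → ℝ) :
    eik a θ = ∏ j, Complex.exp (Complex.I * (a j) * (θ j)) := by
  rw [eik, ← Complex.exp_sum]
  congr 1
  rw [Finset.mul_sum]
  congr 1; funext j; ring

lemma aux_sum_eik_grid {d N : ℕ} (hN : 0 < N) (a : Fin d → ℤ) (ha : a ≠ 0)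
    (hbd : ∀ j, (a j).natAbs < N) (θ : Fin d → ℝ) :
    ∑ t : Fin d → Fin N, eik a (fun j => θ j + 2 * Real.pi * (t j) / N) = 0 := by
  have hfac : ∀ t : Fin d → Fin N,
      eik a (fun j => θ j + 2 * Real.pi * (t j) / N)
        = ∏ j, Complex.exp (Complex.I * (a j) * ((θ j : ℂ) + 2 * (Real.pi:ℂ) * ((t j : ℕ) : ℂ) / (N:ℂ))) := by
    intro t
    rw [aux_eik_as_prod]
    exact Finset.prod_congr rfl fun j _ => by push_cast; ring_nf
  rw [Finset.sum_congr rfl fun t _ => hfac t]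
  rw [← Fintype.prod_sum (fun j (s : Fin N) =>
    Complex.exp (Complex.I * (a j) * ((θ j : ℂ) + 2 * (Real.pi:ℂ) * ((s : ℕ) : ℂ) / (N:ℂ))))]
  obtain ⟨j0, hj0⟩ : ∃ j, a j ≠ 0 := by
    by_contra h
    push_neg at h
    exact ha (funext h)
  apply Finset.prod_eq_zero (Finset.mem_univ j0)
  have hsplit : ∀ s : Fin N,
      Complex.exp (Complex.I * (a j0) * ((θ j0 : ℂ) + 2 * (Real.pi:ℂ) * ((s:ℕ) : ℂ) / (N:ℂ)))
      = Complex.exp (Complex.I * (a j0) * (θ j0 : ℂ))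
        * Complex.exp (Complex.I * (a j0) * (2 * Real.pi * (s:ℕ) / N)) := by
    intro s
    rw [← Complex.exp_add]
    congr 1
    push_cast
    ring
  rw [Finset.sum_congr rfl fun s _ => hsplit s, ← Finset.mul_sum]
  rw [aux_sum_exp_root N (a j0) hj0 (hbd j0), mul_zero]

lemma aux_grid_inversion {d m N : ℕ} (hN : 0 < N) (Λ : Finset (Fin d → ℤ))
    (hbd : ∀ k ∈ Λ, ∀ j, 2 * (k j).natAbs < N)
    (Q : (Fin d → ℤ) → Matrix (Fin m) (Fin m) ℂ) (θ : Fin d → ℝ)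
    {l : Fin d → ℤ} (hl : l ∈ Λ) :
    ∑ t : Fin d → Fin N,
      eik l (fun j => θ j + 2 * Real.pi * (t j) / N) •
        trigPoly Λ Q (fun j => θ j + 2 * Real.pi * (t j) / N)
      = ((N:ℂ)^d) • Q l := by
  simp only [trigPoly, Finset.smul_sum, smul_smul]
  rw [Finset.sum_comm]
  rw [Finset.sum_eq_single_of_mem l hl]
  · have h1 : ∀ t : Fin d → Fin N,
        eik l (fun j => θ j + 2 * Real.pi * (t j) / N)
          * eik (-l) (fun j => θ j + 2 * Real.pi * (t j) / N) = 1 := by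
      intro t
      rw [aux_eik_mul, add_neg_cancel, aux_eik_zero]
    rw [Finset.sum_congr rfl fun t _ => by rw [h1 t]]
    rw [Finset.sum_const, Finset.card_univ]
    rw [one_smul]
    rw [Fintype.card_fun]
    simp [← Nat.cast_smul_eq_nsmul ℂ]
  · intro k hk hkl
    have hsum : ∀ t : Fin d → Fin N,
        eik l (fun j => θ j + 2 * Real.pi * (t j) / N)
          * eik (-k) (fun j => θ j + 2 * Real.pi * (t j) / N)
          = eik (l - k) (fun j => θ j + 2 * Real.pi * (t j) / N) := by
      intro t; rw [aux_eik_mul, sub_eq_add_neg]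
    rw [Finset.sum_congr rfl fun t _ => by rw [hsum t], ← Finset.sum_smul]
    rw [aux_sum_eik_grid hN (l - k) (sub_ne_zero.mpr (Ne.symm hkl)) ?_ θ, zero_smul]
    intro j
    have h1 := hbd l hl j
    have h2 := hbd k hk j
    have h3 : (l j - k j).natAbs ≤ (l j).natAbs + (k j).natAbs := Int.natAbs_sub_le _ _
    have h4 : ((l - k) j).natAbs = (l j - k j).natAbs := rfl
    omega

lemma aux_trigPoly_add {d m : ℕ} (Λ : Finset (Fin d → ℤ))
    (A B : (Fin d → ℤ) → Matrix (Fin m) (Fin m) ℂ) (θ : Fin d → ℝ) :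
    trigPoly Λ (fun k => A k + B k) θ = trigPoly Λ A θ + trigPoly Λ B θ := by
  simp [trigPoly, smul_add, Finset.sum_add_distrib]

end Helpers

/-- **The normal cone to `ℒ₊` is contained in minus the closure of the dual cone `𝔠₊`**
(Lemma 7.1). If `Σ_K` belongs to the normal cone `K(Q°)` of `ℒ₊` at `Q° ∈ ℒ₊`, i.e.
`⟨Σ_K, Q − Q°⟩ ≤ 0` for all `Q ∈ ℒ₊`, then `−Σ_K` is in the closure of `𝔠₊`
(with respect to the norm `‖·‖` on coefficient families). -/
theorem normalCone_subset_neg_closure_dualCone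
    {d m : ℕ} (hd : 1 ≤ d) (hm : 1 ≤ m) (ν : ℕ) (hν : 2 ≤ ν)
    (Λ : Finset (Fin d → ℤ)) (hΛ : IsIndexSet Λ)
    (Ψ : (Fin d → ℝ) → Matrix (Fin m) (Fin m) ℂ)
    (hΨbc : BoundedCoercive Ψ) (hΨrat : RationalPrior Ψ)
    (Qopt : (Fin d → ℤ) → Matrix (Fin m) (Fin m) ℂ) (hQopt : memFeasible ν Λ Ψ Qopt)
    (SigK : (Fin d → ℤ) → Matrix (Fin m) (Fin m) ℂ) (hSigK : IsCovData SigK)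
    (hK : ∀ Q : (Fin d → ℤ) → Matrix (Fin m) (Fin m) ℂ, memFeasible ν Λ Ψ Q →
      pairing Λ (fun k => Q k - Qopt k) SigK ≤ 0) :
    ∀ ε : ℝ, 0 < ε →
      ∃ Sig' : (Fin d → ℤ) → Matrix (Fin m) (Fin m) ℂ,
        memDualCone Λ Sig' ∧ dualNorm Λ (fun k => Sig' k - (- SigK k)) < ε := by
  classical
  intro ε hε
  set δ : ℝ := ε / (2 * (m + 1)) with hδdef
  have hδ : 0 < δ := by positivity
  set E : (Fin d → ℤ) → Matrix (Fin m) (Fin m) ℂ :=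
    fun k => if k = 0 then (1 : Matrix (Fin m) (Fin m) ℂ) else 0 with hEdef
  have hEH : ∀ k, (E k)ᴴ = E k := by
    intro k
    by_cases h : k = 0 <;> simp [hEdef, h]
  have hE0 : E 0 = 1 := by simp [hEdef]
  refine ⟨fun k => -SigK k + (δ:ℂ) • E k, ⟨?_, ?_⟩, ?_⟩
  · -- IsCovData
    intro k
    show -SigK (-k) + (δ:ℂ) • E (-k) = (-SigK k + (δ:ℂ) • E k)ᴴ
    have hE : E (-k) = E k := by simp [hEdef, neg_eq_zero]
    rw [hE, conjTranspose_add, conjTranspose_neg, ← hSigK k, conjTranspose_smul, hEH]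
    congr 1
    simp [Complex.star_def, Complex.conj_ofReal]
  · -- positivity on the dual cone
    intro Q hQdual hQpsd hQne
    obtain ⟨k0, hk0Λ, hk0⟩ := hQne
    -- the pairing splits
    have hpair : pairing Λ Q (fun k => -SigK k + (δ:ℂ) • E k)
        = - pairing Λ Q SigK + δ * (Matrix.trace (Q 0)).re := by
      unfold pairing
      have hterm : ∀ k ∈ Λ, Matrix.trace (Q k * (-SigK k + (δ:ℂ) • E k)ᴴ)
          = - Matrix.trace (Q k * (SigK k)ᴴ) + (δ:ℂ) * Matrix.trace (Q k * E k) := by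
        intro k _
        rw [conjTranspose_add, conjTranspose_neg, conjTranspose_smul, mul_add, Matrix.trace_add,
          mul_neg, Matrix.trace_neg, hEH]
        congr 1
        rw [Matrix.mul_smul, Matrix.trace_smul]
        simp [Complex.star_def, Complex.conj_ofReal, smul_eq_mul]
      rw [Finset.sum_congr rfl hterm, Finset.sum_add_distrib, Complex.add_re]
      congr 1
      · rw [Finset.sum_neg_distrib, Complex.neg_re]
      · rw [← Finset.mul_sum]
        rw [Finset.sum_eq_single_of_mem 0 hΛ.1 (fun k _ hne => by simp [hEdef, hne])]
        rw [hE0, mul_one]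
        exact Complex.re_ofReal_mul δ _
    -- the normal-cone inequality gives nonnegativity of -⟨Q, Σ_K⟩
    have hfeas : memFeasible ν Λ Ψ (fun k => Qopt k + Q k) := by
      refine ⟨?_, ?_, ?_⟩
      · intro k
        simp only [hQopt.1 k, hQdual k, conjTranspose_add]
      · intro θ
        have h := Matrix.PosSemidef.add (hQopt.2.1 θ) (hQpsd θ)
        rw [aux_trigPoly_add, ← add_assoc]
        exact h
      · intro hall
        apply hQopt.2.2
        intro θ
        have h := hall θ
        rw [aux_trigPoly_add, ← add_assoc] at h
        exact aux_psd_add_eq_zero (hQopt.2.1 θ) (hQpsd θ) h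
    have hA : pairing Λ Q SigK ≤ 0 := by
      have h := hK _ hfeas
      simpa [add_sub_cancel_left] using h
    -- the grid bound
    set Bnd : ℕ := Λ.sup (fun k => Finset.univ.sup fun j => (k j).natAbs) with hBnd
    set N : ℕ := 2 * Bnd + 1 with hNdef
    have hN : 0 < N := Nat.succ_pos _
    have hbd : ∀ k ∈ Λ, ∀ j, 2 * (k j).natAbs < N := by
      intro k hk j
      have h1 : (k j).natAbs ≤ Finset.univ.sup fun j => (k j).natAbs :=
        Finset.le_sup (f := fun j => (k j).natAbs) (Finset.mem_univ j)
      have h2 : (Finset.univ.sup fun j => (k j).natAbs) ≤ Bnd :=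
        Finset.le_sup (f := fun k => Finset.univ.sup fun j => (k j).natAbs) hk
      exact Nat.lt_succ_of_le (Nat.mul_le_mul_left 2 (le_trans h1 h2))
    -- find a point where the trig polynomial is nonzero
    have hθ : ∃ θ, trigPoly Λ Q θ ≠ 0 := by
      by_contra h
      push_neg at h
      have h0 := aux_grid_inversion (N := N) hN Λ hbd Q 0 hk0Λ
      simp only [h, smul_zero, Finset.sum_const, Finset.card_univ] at h0
      have hNd : ((N:ℂ)^d) ≠ 0 := by
        apply pow_ne_zero
        exact_mod_cast hN.ne'
      apply hk0
      rcases smul_eq_zero.mp h0.symm with h' | h'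
      · exact absurd h' hNd
      · exact h'
    obtain ⟨θs, hθs⟩ := hθ
    -- the inversion formula at l = 0
    have hinv := aux_grid_inversion (N := N) hN Λ hbd Q θs hΛ.1
    have hinv' : ∑ t : Fin d → Fin N,
        trigPoly Λ Q (fun j => θs j + 2 * Real.pi * (t j) / N) = ((N:ℂ)^d) • Q 0 := by
      rw [← hinv]
      exact Finset.sum_congr rfl fun t _ => by rw [aux_eik_zero, one_smul]
    have htrace : ((N:ℝ)^d) * (Matrix.trace (Q 0)).re
        = ∑ t : Fin d → Fin N,
            (Matrix.trace (trigPoly Λ Q (fun j => θs j + 2 * Real.pi * (t j) / N))).re := by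
      have h := congrArg (fun M : Matrix (Fin m) (Fin m) ℂ => (Matrix.trace M).re) hinv'
      simp only [Matrix.trace_sum, Complex.re_sum, Matrix.trace_smul, smul_eq_mul] at h
      rw [h]
      have hcast : ((N:ℂ)^d) = (((N:ℝ)^d : ℝ) : ℂ) := by push_cast; ring
      rw [hcast, Complex.re_ofReal_mul]
    have hpos_sum : 0 < ∑ t : Fin d → Fin N,
        (Matrix.trace (trigPoly Λ Q (fun j => θs j + 2 * Real.pi * (t j) / N))).re := by
      apply Finset.sum_pos'
      · intro t _
        exact (aux_psd_trace (hQpsd _)).1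
      · refine ⟨(fun _ => (⟨0, hN⟩ : Fin N)), Finset.mem_univ _, ?_⟩
        have hpt : (fun j => θs j + 2 * Real.pi * ((((⟨0, hN⟩ : Fin N)) : ℕ) : ℝ) / N) = θs := by
          funext j; simp
        rw [hpt]
        exact aux_trace_re_pos (hQpsd θs) hθs
    have hNd : (0:ℝ) < (N:ℝ)^d := by positivity
    have hQ0 : 0 < (Matrix.trace (Q 0)).re := by nlinarith
    rw [hpair]
    have := mul_pos hδ hQ0
    linarith
  · -- the norm estimate
    have hfun : (fun k => (-SigK k + (δ:ℂ) • E k) - (- SigK k)) = fun k => (δ:ℂ) • E k := by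
      funext k
      abel
    rw [hfun]
    unfold dualNorm
    rw [Finset.sum_eq_single_of_mem 0 hΛ.1 (fun k _ hne => by simp [hEdef, hne])]
    simp only [hE0]
    have hδ1 : ((δ:ℂ) • (1 : Matrix (Fin m) (Fin m) ℂ))ᴴ = (δ:ℂ) • 1 := by
      rw [conjTranspose_smul]
      simp [Complex.star_def, Complex.conj_ofReal]
    rw [hδ1, Matrix.smul_mul, Matrix.mul_smul, one_mul, Matrix.trace_smul, Matrix.trace_smul,
      Matrix.trace_one, smul_eq_mul, smul_eq_mul]
    have hre : ((δ:ℂ) * ((δ:ℂ) * (m : ℂ))).re = δ * (δ * m) := by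
      rw [Complex.re_ofReal_mul]
      congr 1
      rw [Complex.re_ofReal_mul]
      simp
    rw [Fintype.card_fin, hre]
    have hsq : δ * (δ * m) ≤ (δ * (m+1))^2 := by nlinarith
    calc Real.sqrt (δ * (δ * m)) ≤ Real.sqrt ((δ * (m+1))^2) := Real.sqrt_le_sqrt hsq
      _ = δ * (m+1) := Real.sqrt_sq (by positivity)
      _ < ε := by
          rw [hδdef]
          rw [div_mul_eq_mul_div]
          rw [div_lt_iff₀ (by positivity)]
          nlinarith


end
end
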